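/- arXiv:2011.14865 — 10 statements merged into one kernel-verified Lean document; each statement's English description precedes it below -/
import Mathlib

section
/- Let p ≥ 1, let β̃ ∈ ℝ^p, and let I be a symmetric positive definite p×p real matrix. For λ ≥ 0 define b̂(λ) = −λ (I + λ·Id)⁻¹ β̃, v̂(λ) = (I + λ·Id)⁻¹ I (I + λ·Id)⁻¹ and m̂(λ) = v̂(λ) + b̂(λ) b̂(λ)ᵀ. Then for every λ > 0 with λ · (β̃ᵀβ̃) < 2 the matrix m̂(0) − m̂(λ) is symmetric positive definite; in particular there exists λ > 0 such that m̂(0) − m̂(λ) is positive definite. -/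
open Matrix

/-- Asymptotic bias of the ridge estimator at penalty `l`, with plug-in `β`. -/
noncomputable def ridgeBias {p : ℕ} (I : Matrix (Fin p) (Fin p) ℝ) (β : Fin p → ℝ)
    (l : ℝ) : Fin p → ℝ :=
  (-l) • ((I + l • (1 : Matrix (Fin p) (Fin p) ℝ))⁻¹ *ᵥ β)

/-- Asymptotic variance of the ridge estimator at penalty `l`. -/
noncomputable def ridgeVar {p : ℕ} (I : Matrix (Fin p) (Fin p) ℝ) (l : ℝ) :
    Matrix (Fin p) (Fin p) ℝ :=
  (I + l • (1 : Matrix (Fin p) (Fin p) ℝ))⁻¹ * I *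
    (I + l • (1 : Matrix (Fin p) (Fin p) ℝ))⁻¹

/-- Estimated second-order moment matrix `m̂(λ) = v̂(λ) + b̂(λ) b̂(λ)ᵀ`. -/
noncomputable def ridgeMoment {p : ℕ} (I : Matrix (Fin p) (Fin p) ℝ) (β : Fin p → ℝ)
    (l : ℝ) : Matrix (Fin p) (Fin p) ℝ :=
  ridgeVar I l + vecMulVec (ridgeBias I β l) (ridgeBias I β l)

lemma aux_vecMulVec_mulVec {p : ℕ} (u v x : Fin p → ℝ) :
    vecMulVec u v *ᵥ x = (v ⬝ᵥ x) • u := by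
  ext i
  simp only [mulVec, dotProduct, vecMulVec_apply, Pi.smul_apply, smul_eq_mul,
    Finset.sum_mul]
  exact Finset.sum_congr rfl fun j _ => by ring

lemma aux_smul_one_posSemidef {p : ℕ} {l : ℝ} (hl : 0 ≤ l) :
    (l • (1 : Matrix (Fin p) (Fin p) ℝ)).PosSemidef := by
  rw [posSemidef_iff_dotProduct_mulVec]
  constructor
  · show _ᴴ = _
    simp [conjTranspose_smul]
  · intro x
    simp only [smul_mulVec, one_mulVec, dotProduct_smul, smul_eq_mul, star_trivial]
    exact mul_nonneg hl (Finset.sum_nonneg fun i _ => mul_self_nonneg _)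

lemma aux_symm_dot {p : ℕ} (A : Matrix (Fin p) (Fin p) ℝ) (hA : Aᵀ = A)
    (w z : Fin p → ℝ) : (A *ᵥ w) ⬝ᵥ z = w ⬝ᵥ (A *ᵥ z) := by
  rw [dotProduct_mulVec w, ← mulVec_transpose, hA]

/-- For every `λ > 0` with `λ · β̃ᵀβ̃ < 2` the matrix `m̂(0) − m̂(λ)` is (symmetric)
positive definite; in particular such a `λ > 0` exists. -/
theorem stmt0 (p : ℕ) (hp : 1 ≤ p) (β : Fin p → ℝ) (I : Matrix (Fin p) (Fin p) ℝ)
    (hI : I.PosDef) :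
    (∀ l : ℝ, 0 < l → l * (β ⬝ᵥ β) < 2 →
      (ridgeMoment I β 0 - ridgeMoment I β l).PosDef) ∧
    ∃ l : ℝ, 0 < l ∧ (ridgeMoment I β 0 - ridgeMoment I β l).PosDef := by
  have hIdet : IsUnit I.det := isUnit_iff_ne_zero.mpr hI.det_pos.ne'
  have hIinv : I⁻¹.PosDef := hI.inv
  have hbb : 0 ≤ β ⬝ᵥ β := Finset.sum_nonneg fun i _ => mul_self_nonneg _
  have hm0 : ridgeMoment I β 0 = I⁻¹ := by
    unfold ridgeMoment ridgeVar ridgeBias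
    have h0 : vecMulVec ((-(0:ℝ)) • ((I + (0:ℝ) • (1 : Matrix (Fin p) (Fin p) ℝ))⁻¹ *ᵥ β))
        ((-(0:ℝ)) • ((I + (0:ℝ) • (1 : Matrix (Fin p) (Fin p) ℝ))⁻¹ *ᵥ β)) = 0 := by
      ext i j; simp [vecMulVec_apply]
    rw [h0, add_zero, zero_smul, add_zero, Matrix.nonsing_inv_mul _ hIdet, Matrix.one_mul]
  have key : ∀ l : ℝ, 0 < l → l * (β ⬝ᵥ β) < 2 →
      (ridgeMoment I β 0 - ridgeMoment I β l).PosDef := by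
    intro l hl hlb
    set A := I + l • (1 : Matrix (Fin p) (Fin p) ℝ) with hA_def
    have hA : A.PosDef := hI.add_posSemidef (aux_smul_one_posSemidef hl.le)
    have hAdet : IsUnit A.det := isUnit_iff_ne_zero.mpr hA.det_pos.ne'
    have hAinv : A⁻¹.PosDef := hA.inv
    have hAT : Aᵀ = A := by
      rw [← conjTranspose_eq_transpose_of_trivial]; exact hA.isHermitian
    have hAinvT : (A⁻¹)ᵀ = A⁻¹ := by
      rw [← conjTranspose_eq_transpose_of_trivial]; exact hAinv.isHermitian
    set b := (-l) • (A⁻¹ *ᵥ β) with hb_def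
    have hml : ridgeMoment I β l = A⁻¹ * I * A⁻¹ + vecMulVec b b := rfl
    have hAIA : A * I⁻¹ * A = I + (2 * l) • (1 : Matrix (Fin p) (Fin p) ℝ)
        + (l * l) • I⁻¹ := by
      have h1 : A * I⁻¹ = 1 + l • I⁻¹ := by
        rw [hA_def, add_mul, Matrix.mul_nonsing_inv _ hIdet, Matrix.smul_mul, Matrix.one_mul]
      rw [h1, add_mul, Matrix.one_mul, Matrix.smul_mul, hA_def, mul_add,
        Matrix.nonsing_inv_mul _ hIdet, Matrix.mul_smul, Matrix.mul_one]
      rw [smul_add, smul_smul, two_mul, add_smul]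
      abel
    rw [hm0, hml, posDef_iff_dotProduct_mulVec]
    constructor
    · -- Hermitian
      have h1 : (I⁻¹).IsHermitian := hIinv.isHermitian
      have h2 : (A⁻¹ * I * A⁻¹).IsHermitian := by
        show _ᴴ = _
        rw [conjTranspose_mul, conjTranspose_mul, hAinv.isHermitian.eq, hI.isHermitian.eq,
          Matrix.mul_assoc]
      have h3 : (vecMulVec b b).IsHermitian := by
        show _ᴴ = _
        ext i j
        simp [conjTranspose_apply, vecMulVec_apply, mul_comm]
      exact h1.sub (h2.add h3)
    · -- positivity
      intro x hx
      set y := A⁻¹ *ᵥ x with hy_def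
      have hxy : x = A *ᵥ y := by
        rw [hy_def, mulVec_mulVec, Matrix.mul_nonsing_inv _ hAdet, one_mulVec]
      have hy : y ≠ 0 := by
        intro h
        apply hx
        rw [hxy, h, mulVec_zero]
      have hyy : 0 < y ⬝ᵥ y := by
        have := dotProduct_self_star_pos_iff.mpr hy
        simpa [star_trivial] using this
      have hII : 0 < y ⬝ᵥ (I⁻¹ *ᵥ y) := by
        have := hIinv.dotProduct_mulVec_pos hy
        simpa [star_trivial] using this
      have hCS : (β ⬝ᵥ y) ^ 2 ≤ (β ⬝ᵥ β) * (y ⬝ᵥ y) := by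
        have := Finset.sum_mul_sq_le_sq_mul_sq Finset.univ β y
        simpa [dotProduct, sq] using this
      -- compute the quadratic form
      have hterm3 : x ⬝ᵥ (vecMulVec b b *ᵥ x) = (l * (β ⬝ᵥ y)) ^ 2 := by
        rw [aux_vecMulVec_mulVec, dotProduct_smul, smul_eq_mul]
        have hbx : b ⬝ᵥ x = -(l * (β ⬝ᵥ y)) := by
          rw [hb_def, smul_dotProduct, smul_eq_mul,
            aux_symm_dot A⁻¹ hAinvT β x]
          ring
        rw [hbx, dotProduct_comm x b, hbx]
        ring
      have hterm2 : x ⬝ᵥ ((A⁻¹ * I * A⁻¹) *ᵥ x) = y ⬝ᵥ (I *ᵥ y) := by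
        rw [← mulVec_mulVec, ← mulVec_mulVec, ← aux_symm_dot A⁻¹ hAinvT x, ← hy_def]
      have hterm1 : x ⬝ᵥ (I⁻¹ *ᵥ x) =
          y ⬝ᵥ (I *ᵥ y) + (2 * l) * (y ⬝ᵥ y) + (l * l) * (y ⬝ᵥ (I⁻¹ *ᵥ y)) := by
        conv_lhs => rw [hxy]
        rw [aux_symm_dot A hAT y, mulVec_mulVec, mulVec_mulVec, hAIA]
        rw [add_mulVec, add_mulVec, smul_mulVec, smul_mulVec, one_mulVec,
          dotProduct_add, dotProduct_add, dotProduct_smul, dotProduct_smul]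
        simp [smul_eq_mul]
      rw [star_trivial, sub_mulVec, dotProduct_sub, add_mulVec, dotProduct_add,
        hterm1, hterm2, hterm3]
      have hCS' : (l * (β ⬝ᵥ y)) ^ 2 ≤ l * l * ((β ⬝ᵥ β) * (y ⬝ᵥ y)) := by
        have : (l * (β ⬝ᵥ y)) ^ 2 = l * l * (β ⬝ᵥ y) ^ 2 := by ring
        rw [this]
        exact mul_le_mul_of_nonneg_left hCS (by positivity)
      nlinarith [mul_pos hl hyy, mul_pos (mul_pos hl hl) hII]
  refine ⟨key, ⟨1 / (β ⬝ᵥ β + 1), by positivity, key _ (by positivity) ?_⟩⟩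
  rw [div_mul_eq_mul_div, one_mul, div_lt_iff₀ (by positivity)]
  nlinarith
end

section
/- If a_{k0} > 1 and a_{k1} > 1 for all k = 1,…,K (no separation in the data), then there exists δ > 0 such that D(λ) < D(0) for all λ ∈ (0, δ); in particular the LOOCV deviance D is not minimized at λ = 0. -/
/-- Leave-one-out cross-validated deviance for a saturated model with `K` categories,
counts `a0 k` (nonevents) and `a1 k` (events), and ridge penalty parameter `l`.
Summands whose count coefficient is zero vanish (in Lean, `0 * log _ = 0`). -/
noncomputable def loocvDev (K : ℕ) (a0 a1 : Fin K → ℕ) (l : ℝ) : ℝ :=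
  -2 * ∑ k : Fin K,
    ((a0 k : ℝ) *
        Real.log (1 - ((a1 k : ℝ) + 2 * l) / ((a0 k : ℝ) + (a1 k : ℝ) - 1 + 4 * l)) +
     (a1 k : ℝ) *
        Real.log (((a1 k : ℝ) - 1 + 2 * l) / ((a0 k : ℝ) + (a1 k : ℝ) - 1 + 4 * l)))

private lemma logDeriv_aux (b m c : ℝ) (hb : 0 < b) :
    HasDerivAt (fun l : ℝ => c * Real.log (b + m * l)) (c * m / b) 0 := by
  have hlin : HasDerivAt (fun l : ℝ => b + m * l) m 0 := by
    simpa using ((hasDerivAt_id (0:ℝ)).const_mul m).const_add b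
  have hlog := hlin.log (by simpa using hb.ne')
  simpa [mul_div_assoc] using hlog.const_mul c

private lemma dpos_aux (x y : ℝ) (hx : 2 ≤ x) (hy : 2 ≤ y) :
    0 < x * 2 / (x - 1) + y * 2 / (y - 1) - (x + y) * 4 / (x + y - 1) := by
  have h1 : (0:ℝ) < x - 1 := by linarith
  have h2 : (0:ℝ) < y - 1 := by linarith
  have h3 : (0:ℝ) < x + y - 1 := by linarith
  rw [sub_pos, div_add_div _ _ (ne_of_gt h1) (ne_of_gt h2), div_lt_div_iff₀ h3 (mul_pos h1 h2)]
  nlinarith [mul_pos h1 h2, mul_pos (mul_pos h1 h2) h3]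

/-- No separation (`a_{k0}, a_{k1} > 1` for all `k`) implies the LOOCV deviance is
strictly smaller than `D(0)` on some right-neighborhood of `0`; in particular it is
not minimized at `λ = 0`. -/
theorem stmt2 (K : ℕ) (hK : 1 ≤ K) (a0 a1 : Fin K → ℕ)
    (h : ∀ k, 1 < a0 k ∧ 1 < a1 k) :
    (∃ δ : ℝ, 0 < δ ∧ ∀ l : ℝ, 0 < l → l < δ →
      loocvDev K a0 a1 l < loocvDev K a0 a1 0) ∧
    ¬ (∀ l : ℝ, 0 ≤ l → loocvDev K a0 a1 0 ≤ loocvDev K a0 a1 l) := by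
  have hx : ∀ k, (2:ℝ) ≤ (a0 k : ℝ) := fun k => by exact_mod_cast (h k).1
  have hy : ∀ k, (2:ℝ) ≤ (a1 k : ℝ) := fun k => by exact_mod_cast (h k).2
  -- the derivative of each summand at 0
  set d : Fin K → ℝ := fun k =>
    (a0 k : ℝ) * 2 / ((a0 k : ℝ) - 1) + (a1 k : ℝ) * 2 / ((a1 k : ℝ) - 1)
      - ((a0 k : ℝ) + (a1 k : ℝ)) * 4 / ((a0 k : ℝ) + (a1 k : ℝ) - 1) with hd
  have hderiv : ∀ k : Fin K, HasDerivAt (fun l : ℝ =>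
      ((a0 k : ℝ) *
          Real.log (1 - ((a1 k : ℝ) + 2 * l) / ((a0 k : ℝ) + (a1 k : ℝ) - 1 + 4 * l)) +
       (a1 k : ℝ) *
          Real.log (((a1 k : ℝ) - 1 + 2 * l) / ((a0 k : ℝ) + (a1 k : ℝ) - 1 + 4 * l))))
      (d k) 0 := by
    intro k
    set x : ℝ := (a0 k : ℝ)
    set y : ℝ := (a1 k : ℝ)
    have hx2 : (2:ℝ) ≤ x := hx k
    have hy2 : (2:ℝ) ≤ y := hy k
    -- derivative of the rewritten form
    have h1 := logDeriv_aux (x - 1) 2 x (by linarith)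
    have h2 := logDeriv_aux (y - 1) 2 y (by linarith)
    have h3 := logDeriv_aux (x + y - 1) 4 (x + y) (by linarith)
    have htil : HasDerivAt (fun l : ℝ =>
        x * Real.log (x - 1 + 2 * l) + y * Real.log (y - 1 + 2 * l)
          - (x + y) * Real.log (x + y - 1 + 4 * l)) (d k) 0 := by
      have := (h1.fun_add h2).fun_sub h3
      simpa [hd] using this
    refine htil.congr_of_eventuallyEq ?_
    have hball : Metric.ball (0:ℝ) (1/8) ∈ nhds (0:ℝ) := Metric.ball_mem_nhds 0 (by norm_num)
    filter_upwards [hball] with l hl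
    rw [Real.ball_eq_Ioo] at hl
    have hl8 : -(1/8 : ℝ) < l ∧ l < 1/8 :=
      ⟨by simpa using hl.1, by simpa using hl.2⟩
    have p1 : (0:ℝ) < x - 1 + 2 * l := by nlinarith [hl8.1, hl8.2]
    have p2 : (0:ℝ) < y - 1 + 2 * l := by nlinarith [hl8.1, hl8.2]
    have p3 : (0:ℝ) < x + y - 1 + 4 * l := by nlinarith [hl8.1, hl8.2]
    have e1 : 1 - (y + 2 * l) / (x + y - 1 + 4 * l) = (x - 1 + 2 * l) / (x + y - 1 + 4 * l) := by
      rw [eq_div_iff p3.ne', sub_mul, div_mul_cancel₀ _ p3.ne']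
      ring
    rw [e1, Real.log_div p1.ne' p3.ne', Real.log_div p2.ne' p3.ne']
    ring
  -- derivative of loocvDev at 0
  have hD : HasDerivAt (loocvDev K a0 a1) (-2 * ∑ k : Fin K, d k) 0 := by
    have hsum : HasDerivAt (fun l : ℝ => ∑ k : Fin K,
        ((a0 k : ℝ) *
            Real.log (1 - ((a1 k : ℝ) + 2 * l) / ((a0 k : ℝ) + (a1 k : ℝ) - 1 + 4 * l)) +
         (a1 k : ℝ) *
            Real.log (((a1 k : ℝ) - 1 + 2 * l) / ((a0 k : ℝ) + (a1 k : ℝ) - 1 + 4 * l))))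
        (∑ k : Fin K, d k) 0 := HasDerivAt.fun_sum (fun k _ => hderiv k)
    exact hsum.const_mul (-2 : ℝ)
  have hdneg : -2 * ∑ k : Fin K, d k < 0 := by
    have hpos : 0 < ∑ k : Fin K, d k := by
      apply Finset.sum_pos
      · intro k _
        exact dpos_aux _ _ (hx k) (hy k)
      · haveI : Nonempty (Fin K) := Fin.pos_iff_nonempty.mp hK
        exact Finset.univ_nonempty
    linarith
  -- from negative derivative to strict decrease on a right neighborhood
  have hslope := hasDerivAt_iff_tendsto_slope.mp hD
  have hslope' : Filter.Tendsto (slope (loocvDev K a0 a1) 0) (nhdsWithin 0 (Set.Ioi 0))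
      (nhds (-2 * ∑ k : Fin K, d k)) :=
    hslope.mono_left (nhdsWithin_mono 0 (fun x hx => ne_of_gt hx))
  have hev : ∀ᶠ l in nhdsWithin (0:ℝ) (Set.Ioi 0),
      loocvDev K a0 a1 l < loocvDev K a0 a1 0 := by
    filter_upwards [hslope'.eventually_lt_const hdneg, self_mem_nhdsWithin] with l hl hl0
    have hl0' : (0:ℝ) < l := hl0
    rw [slope_def_field] at hl
    have := (div_neg_iff).mp (by simpa using hl)
    rcases this with ⟨h1, h2⟩ | ⟨h1, h2⟩
    · linarith
    · linarith
  obtain ⟨ε, hε, hsub⟩ := Metric.mem_nhdsWithin_iff.mp hev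
  have main : ∃ δ : ℝ, 0 < δ ∧ ∀ l : ℝ, 0 < l → l < δ →
      loocvDev K a0 a1 l < loocvDev K a0 a1 0 := by
    refine ⟨ε, hε, fun l hl0 hlε => ?_⟩
    apply hsub
    constructor
    · simpa [Real.dist_eq, abs_of_pos hl0] using hlε
    · exact hl0
  refine ⟨main, ?_⟩
  obtain ⟨δ, hδ, hδ'⟩ := main
  intro hcontra
  have := hcontra (δ/2) (by linarith)
  have := hδ' (δ/2) (by linarith) (by linarith)
  linarith
end

section
/- If a_{k0} > 1, a_{k1} > 1 and (a_{k0} − a_{k1})² − a_{k•} > 0 for all k = 1,…,K, then the LOOCV deviance D attains its minimum over [0, ∞) at some λ* with 0 < λ* < ∞: there exists λ* > 0 such that D(λ*) ≤ D(λ) for all λ ≥ 0, D(λ*) < D(0), and D(λ*) < lim_{λ→∞} D(λ). -/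
open Real Filter

/-- Per-category log-likelihood contribution in difference-of-logs form. -/
noncomputable def gfun (b0 b1 l : ℝ) : ℝ :=
  b0 * Real.log (b0 - 1 + 2*l) + b1 * Real.log (b1 - 1 + 2*l)
    - (b0 + b1) * Real.log (b0 + b1 - 1 + 4*l)

/-- Derivative of `gfun`. -/
noncomputable def gfun' (b0 b1 l : ℝ) : ℝ :=
  b0 * (2 / (b0 - 1 + 2*l)) + b1 * (2 / (b1 - 1 + 2*l))
    - (b0 + b1) * (4 / (b0 + b1 - 1 + 4*l))

lemma gfun_hasDeriv {b0 b1 : ℝ} (hb0 : 2 ≤ b0) (hb1 : 2 ≤ b1) {l : ℝ} (hl : -1/2 < l) :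
    HasDerivAt (gfun b0 b1) (gfun' b0 b1 l) l := by
  have h0 : (0:ℝ) < b0 - 1 + 2*l := by linarith
  have h1 : (0:ℝ) < b1 - 1 + 2*l := by linarith
  have h2 : (0:ℝ) < b0 + b1 - 1 + 4*l := by linarith
  have d0 : HasDerivAt (fun x : ℝ => b0 - 1 + 2*x) 2 l := by
    simpa using ((hasDerivAt_id l).const_mul 2).const_add (b0 - 1)
  have d1 : HasDerivAt (fun x : ℝ => b1 - 1 + 2*x) 2 l := by
    simpa using ((hasDerivAt_id l).const_mul 2).const_add (b1 - 1)
  have d2 : HasDerivAt (fun x : ℝ => b0 + b1 - 1 + 4*x) 4 l := by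
    simpa using ((hasDerivAt_id l).const_mul 4).const_add (b0 + b1 - 1)
  have := (((d0.log h0.ne').const_mul b0).add ((d1.log h1.ne').const_mul b1)).sub
    ((d2.log h2.ne').const_mul (b0 + b1))
  convert this using 1
  all_goals rfl

lemma gfun'_eq {b0 b1 : ℝ} (hb0 : 2 ≤ b0) (hb1 : 2 ≤ b1) {l : ℝ} (hl : -1/2 < l) :
    gfun' b0 b1 l =
    (2*b0*(b1 - 1 + 2*l)*(b0 + b1 - 1 + 4*l) + 2*b1*(b0 - 1 + 2*l)*(b0 + b1 - 1 + 4*l)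
      - 4*(b0+b1)*(b0 - 1 + 2*l)*(b1 - 1 + 2*l))
    / ((b0 - 1 + 2*l) * ((b1 - 1 + 2*l) * (b0 + b1 - 1 + 4*l))) := by
  have h0 : (0:ℝ) < b0 - 1 + 2*l := by linarith
  have h1 : (0:ℝ) < b1 - 1 + 2*l := by linarith
  have h2 : (0:ℝ) < b0 + b1 - 1 + 4*l := by linarith
  unfold gfun'
  have := h0.ne'; have := h1.ne'; have := h2.ne'
  generalize b0 - 1 + 2*l = x at *
  generalize b1 - 1 + 2*l = y at *
  generalize b0 + b1 - 1 + 4*l = z at *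
  field_simp

lemma gfun'_pos_zero {b0 b1 : ℝ} (hb0 : 2 ≤ b0) (hb1 : 2 ≤ b1) :
    0 < gfun' b0 b1 0 := by
  rw [gfun'_eq hb0 hb1 (by norm_num)]
  apply div_pos
  · nlinarith
  · have h0 : (0:ℝ) < b0 - 1 + 2*0 := by linarith
    have h1 : (0:ℝ) < b1 - 1 + 2*0 := by linarith
    have h2 : (0:ℝ) < b0 + b1 - 1 + 4*0 := by linarith
    positivity

lemma gfun'_neg_large {b0 b1 : ℝ} (hb0 : 2 ≤ b0) (hb1 : 2 ≤ b1)
    (hc : 0 < (b0 - b1)^2 - (b0 + b1)) {l : ℝ}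
    (hl : (b0^2 + b1^2) / (2 * ((b0 - b1)^2 - (b0 + b1))) ≤ l) :
    gfun' b0 b1 l < 0 := by
  have hl0 : 0 ≤ l := le_trans (le_of_lt (by positivity)) hl
  rw [gfun'_eq hb0 hb1 (by linarith)]
  apply div_neg_of_neg_of_pos
  · have key : (b0^2 + b1^2) ≤ 2 * ((b0 - b1)^2 - (b0 + b1)) * l := by
      rw [div_le_iff₀ (by positivity)] at hl
      linarith
    nlinarith
  · have h0 : (0:ℝ) < b0 - 1 + 2*l := by linarith
    have h1 : (0:ℝ) < b1 - 1 + 2*l := by linarith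
    have h2 : (0:ℝ) < b0 + b1 - 1 + 4*l := by linarith
    positivity

lemma ratio_tendsto (c d : ℝ) :
    Tendsto (fun l : ℝ => (c + 2*l) / (d + 4*l)) atTop (nhds (1/2)) := by
  have h : Tendsto (fun l : ℝ => (c * l⁻¹ + 2) / (d * l⁻¹ + 4)) atTop
      (nhds ((c * 0 + 2) / (d * 0 + 4))) := by
    apply Tendsto.div
    · exact (tendsto_inv_atTop_zero.const_mul c).add tendsto_const_nhds
    · exact (tendsto_inv_atTop_zero.const_mul d).add tendsto_const_nhds
    · norm_num
  have h2 : (c * 0 + 2) / (d * 0 + 4) = 1/2 := by norm_num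
  rw [h2] at h
  apply h.congr'
  filter_upwards [eventually_gt_atTop (max 0 (|d|))] with l hl
  have hl0 : 0 < l := lt_of_le_of_lt (le_max_left _ _) hl
  have hd : 0 < d + 4 * l := by
    have : -d ≤ |d| := neg_le_abs d
    have h4 : |d| < l := lt_of_le_of_lt (le_max_right _ _) hl
    linarith
  field_simp

lemma gfun_tendsto {b0 b1 : ℝ} (hb0 : 2 ≤ b0) (hb1 : 2 ≤ b1) :
    Tendsto (gfun b0 b1) atTop (nhds (-((b0 + b1) * Real.log 2))) := by
  have t0 := ((ratio_tendsto (b0 - 1) (b0 + b1 - 1)).log (by norm_num)).const_mul b0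
  have t1 := ((ratio_tendsto (b1 - 1) (b0 + b1 - 1)).log (by norm_num)).const_mul b1
  have t := t0.add t1
  have hlog : b0 * Real.log (1/2) + b1 * Real.log (1/2) = -((b0 + b1) * Real.log 2) := by
    rw [one_div, Real.log_inv]; ring
  rw [hlog] at t
  apply t.congr'
  filter_upwards [eventually_ge_atTop (0:ℝ)] with l hl
  have h0 : (0:ℝ) < b0 - 1 + 2*l := by linarith
  have h1 : (0:ℝ) < b1 - 1 + 2*l := by linarith
  have h2 : (0:ℝ) < b0 + b1 - 1 + 4*l := by linarith
  simp only [gfun]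
  rw [Real.log_div h0.ne' h2.ne', Real.log_div h1.ne' h2.ne']
  ring

lemma loocvDev_eq (K : ℕ) (a0 a1 : Fin K → ℕ) (h0 : ∀ k, 1 < a0 k) (h1 : ∀ k, 1 < a1 k)
    {l : ℝ} (hl : 0 ≤ l) :
    loocvDev K a0 a1 l = -2 * ∑ k : Fin K, gfun (a0 k) (a1 k) l := by
  unfold loocvDev
  congr 1
  apply Finset.sum_congr rfl
  intro k _
  have hb0 : (2:ℝ) ≤ (a0 k : ℝ) := by exact_mod_cast h0 k
  have hb1 : (2:ℝ) ≤ (a1 k : ℝ) := by exact_mod_cast h1 k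
  set b0 := (a0 k : ℝ); set b1 := (a1 k : ℝ)
  have hn0 : (0:ℝ) < b0 - 1 + 2*l := by linarith
  have hn1 : (0:ℝ) < b1 - 1 + 2*l := by linarith
  have hd : (0:ℝ) < b0 + b1 - 1 + 4*l := by linarith
  have key : 1 - (b1 + 2*l) / (b0 + b1 - 1 + 4*l) = (b0 - 1 + 2*l) / (b0 + b1 - 1 + 4*l) := by
    rw [eq_div_iff hd.ne', sub_mul, div_mul_cancel₀ _ hd.ne']
    ring
  rw [key, Real.log_div hn0.ne' hd.ne', Real.log_div hn1.ne' hd.ne']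
  simp only [gfun]
  ring

lemma exists_gt_of_hasDerivAt_pos {f : ℝ → ℝ} {c : ℝ} (hf : HasDerivAt f c 0) (hc : 0 < c) :
    ∃ x : ℝ, 0 < x ∧ x < 1 ∧ f 0 < f x := by
  have hslope := hasDerivAt_iff_tendsto_slope.mp hf
  have hev : ∀ᶠ x in nhdsWithin (0:ℝ) {(0:ℝ)}ᶜ, 0 < slope f 0 x :=
    hslope.eventually (eventually_gt_nhds hc)
  have hev' : ∀ᶠ x in nhdsWithin (0:ℝ) (Set.Ioi 0), 0 < slope f 0 x :=
    hev.filter_mono (nhdsWithin_mono 0 (fun x hx => ne_of_gt hx))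
  have hmem : Set.Ioo (0:ℝ) 1 ∈ nhdsWithin (0:ℝ) (Set.Ioi 0) :=
    Ioo_mem_nhdsGT_of_mem ⟨le_refl 0, zero_lt_one⟩
  obtain ⟨x, hx1, hx2⟩ := (hev'.and (eventually_of_mem hmem (fun x hx => hx))).exists
  refine ⟨x, hx2.1, hx2.2, ?_⟩
  have hx0 : (0:ℝ) < x := hx2.1
  have : slope f 0 x = (f x - f 0) / x := by
    simp [slope_def_field, div_eq_iff hx0.ne']
  rw [this] at hx1
  have := (div_pos_iff.mp hx1)
  rcases this with ⟨h, _⟩ | ⟨_, h⟩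
  · linarith
  · linarith

/-- If `a_{k0}, a_{k1} > 1` and `(a_{k0} − a_{k1})² − a_{k•} > 0` for all `k`, the LOOCV
deviance attains its minimum over `[0, ∞)` at some `0 < λ* < ∞`, with `D(λ*) < D(0)`
and `D(λ*)` strictly below the limit of `D` at infinity. -/
theorem stmt3 (K : ℕ) (hK : 1 ≤ K) (a0 a1 : Fin K → ℕ)
    (h : ∀ k, 1 < a0 k ∧ 1 < a1 k ∧
      0 < ((a0 k : ℝ) - (a1 k : ℝ)) ^ 2 - ((a0 k : ℝ) + (a1 k : ℝ))) :
    ∃ lstar : ℝ, 0 < lstar ∧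
      (∀ l : ℝ, 0 ≤ l → loocvDev K a0 a1 lstar ≤ loocvDev K a0 a1 l) ∧
      loocvDev K a0 a1 lstar < loocvDev K a0 a1 0 ∧
      ∃ L : ℝ, Filter.Tendsto (loocvDev K a0 a1) Filter.atTop (nhds L) ∧
        loocvDev K a0 a1 lstar < L := by
  have hne : Nonempty (Fin K) := ⟨⟨0, by omega⟩⟩
  have hb0 : ∀ k, (2:ℝ) ≤ (a0 k : ℝ) := fun k => by exact_mod_cast (h k).1
  have hb1 : ∀ k, (2:ℝ) ≤ (a1 k : ℝ) := fun k => by exact_mod_cast (h k).2.1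
  have hc : ∀ k, 0 < ((a0 k : ℝ) - (a1 k : ℝ))^2 - ((a0 k : ℝ) + (a1 k : ℝ)) :=
    fun k => (h k).2.2
  set D := loocvDev K a0 a1 with hD
  set S : ℝ → ℝ := fun l => ∑ k : Fin K, gfun (a0 k) (a1 k) l with hSdef
  have hDS : ∀ l : ℝ, 0 ≤ l → D l = -2 * S l :=
    fun l hl => loocvDev_eq K a0 a1 (fun k => (h k).1) (fun k => (h k).2.1) hl
  -- derivative of S
  have hSderiv : ∀ l : ℝ, -1/2 < l →
      HasDerivAt S (∑ k : Fin K, gfun' (a0 k) (a1 k) l) l := by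
    intro l hl
    exact HasDerivAt.fun_sum (fun k _ => gfun_hasDeriv (hb0 k) (hb1 k) hl)
  -- S has positive derivative at 0, so S increases from 0
  have hpos : 0 < ∑ k : Fin K, gfun' (a0 k) (a1 k) 0 :=
    Finset.sum_pos (fun k _ => gfun'_pos_zero (hb0 k) (hb1 k)) Finset.univ_nonempty
  obtain ⟨x, hx0, hx1, hSx⟩ := exists_gt_of_hasDerivAt_pos (hSderiv 0 (by norm_num)) hpos
  -- thresholds for antitonicity
  set Lam : Fin K → ℝ := fun k =>
    (((a0 k : ℝ))^2 + ((a1 k : ℝ))^2) /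
      (2 * (((a0 k : ℝ) - (a1 k : ℝ))^2 - ((a0 k : ℝ) + (a1 k : ℝ)))) with hLam
  obtain ⟨Λ0, hΛ0⟩ : ∃ M : ℝ, ∀ k : Fin K, Lam k ≤ M := by
    refine ⟨∑ k : Fin K, max (Lam k) 0, fun k => ?_⟩
    calc Lam k ≤ max (Lam k) 0 := le_max_left _ _
      _ ≤ ∑ i : Fin K, max (Lam i) 0 :=
        Finset.single_le_sum (f := fun i => max (Lam i) 0) (fun i _ => le_max_right _ _) (Finset.mem_univ k)
  set Λ : ℝ := max Λ0 0 with hΛdef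
  have hΛ0' : (0:ℝ) ≤ Λ := le_max_right _ _
  have hΛk : ∀ k, Lam k ≤ Λ := fun k => le_trans (hΛ0 k) (le_max_left _ _)
  -- each gfun is strictly antitone on [Λ, ∞)
  have hanti : ∀ k : Fin K, StrictAntiOn (gfun (a0 k) (a1 k)) (Set.Ici Λ) := by
    intro k
    apply strictAntiOn_of_deriv_neg (convex_Ici Λ)
    · intro z hz
      have hz' : -1/2 < z := by
        have : Λ ≤ z := hz
        linarith
      exact (gfun_hasDeriv (hb0 k) (hb1 k) hz').continuousAt.continuousWithinAt
    · intro z hz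
      rw [interior_Ici] at hz
      have hz' : -1/2 < z := by
        have : Λ < z := hz
        linarith
      rw [(gfun_hasDeriv (hb0 k) (hb1 k) hz').deriv]
      exact gfun'_neg_large (hb0 k) (hb1 k) (hc k) (le_of_lt (lt_of_le_of_lt (hΛk k) hz))
  -- limit values
  set Llim : Fin K → ℝ := fun k => -(((a0 k : ℝ) + (a1 k : ℝ)) * Real.log 2) with hLlim
  have htend : ∀ k : Fin K, Tendsto (gfun (a0 k) (a1 k)) atTop (nhds (Llim k)) :=
    fun k => gfun_tendsto (hb0 k) (hb1 k)
  -- at Λ, each gfun is strictly above its limit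
  have habove : ∀ k : Fin K, Llim k < gfun (a0 k) (a1 k) Λ := by
    intro k
    have h1 : gfun (a0 k) (a1 k) (Λ + 1) < gfun (a0 k) (a1 k) Λ :=
      hanti k Set.self_mem_Ici (by simp only [Set.mem_Ici]; linarith) (by linarith)
    have h2 : Llim k ≤ gfun (a0 k) (a1 k) (Λ + 1) := by
      apply le_of_tendsto (htend k)
      filter_upwards [eventually_ge_atTop (Λ + 1)] with z hz
      exact (hanti k).antitoneOn (by simp only [Set.mem_Ici]; linarith)
        (by simp only [Set.mem_Ici]; linarith) hz
    linarith
  -- sums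
  have hSΛ : ∑ k : Fin K, Llim k < S Λ :=
    Finset.sum_lt_sum_of_nonempty Finset.univ_nonempty (fun k _ => habove k)
  set L : ℝ := -2 * ∑ k : Fin K, Llim k with hLdef
  have hDtend : Tendsto D atTop (nhds L) := by
    have hS : Tendsto S atTop (nhds (∑ k : Fin K, Llim k)) :=
      tendsto_finset_sum _ (fun k _ => htend k)
    have := hS.const_mul (-2 : ℝ)
    apply this.congr'
    filter_upwards [eventually_ge_atTop (0:ℝ)] with l hl
    exact (hDS l hl).symm
  have hDΛL : D Λ < L := by
    rw [hDS Λ hΛ0', hLdef]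
    nlinarith [hSΛ]
  -- eventually D l > D Λ
  have hev : ∀ᶠ l in atTop, D Λ < D l := hDtend.eventually (eventually_gt_nhds hDΛL)
  obtain ⟨M0, hM0⟩ := hev.exists_forall_of_atTop
  set M : ℝ := max M0 (max Λ 1) with hMdef
  have hMΛ : Λ ≤ M := le_trans (le_max_left _ _) (le_max_right _ _)
  have hM1 : (1:ℝ) ≤ M := le_trans (le_max_right _ _) (le_max_right _ _)
  have hM0' : M0 ≤ M := le_max_left _ _
  have hM0le : (0:ℝ) ≤ M := by linarith
  -- continuity of D on [0, M]
  have hDcont : ContinuousOn D (Set.Icc 0 M) := by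
    have hScont : ContinuousOn (fun l => -2 * S l) (Set.Icc 0 M) := by
      apply ContinuousOn.mul continuousOn_const
      apply continuousOn_finset_sum
      intro k _
      intro z hz
      have hz' : -1/2 < z := by
        have := hz.1
        linarith
      exact (gfun_hasDeriv (hb0 k) (hb1 k) hz').continuousAt.continuousWithinAt
    exact hScont.congr (fun z hz => hDS z hz.1)
  obtain ⟨lstar, hlstar_mem, hlstar_min⟩ :=
    (isCompact_Icc).exists_isMinOn (Set.nonempty_Icc.mpr hM0le) hDcont
  have hmin : ∀ l ∈ Set.Icc (0:ℝ) M, D lstar ≤ D l := fun l hl => hlstar_min hl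
  -- key comparisons
  have hxM : x ∈ Set.Icc (0:ℝ) M := ⟨le_of_lt hx0, by linarith⟩
  have hΛM : Λ ∈ Set.Icc (0:ℝ) M := ⟨hΛ0', hMΛ⟩
  have hDx : D x < D 0 := by
    rw [hDS x (le_of_lt hx0), hDS 0 (le_refl 0)]
    nlinarith [hSx]
  have hlt0 : D lstar < D 0 := lt_of_le_of_lt (hmin x hxM) hDx
  have hltL : D lstar < L := lt_of_le_of_lt (hmin Λ hΛM) hDΛL
  have hlstar_pos : 0 < lstar := by
    rcases lt_or_eq_of_le hlstar_mem.1 with hpos | heq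
    · exact hpos
    · exfalso; rw [← heq] at hlt0; exact lt_irrefl _ hlt0
  refine ⟨lstar, hlstar_pos, ?_, hlt0, L, hDtend, hltL⟩
  intro l hl
  rcases le_or_gt l M with hlM | hlM
  · exact hmin l ⟨hl, hlM⟩
  · calc D lstar ≤ D Λ := hmin Λ hΛM
      _ ≤ D l := le_of_lt (hM0 l (by linarith))
end

section
/- If a_{k0} > 1, a_{k1} > 1 and (a_{k0} − a_{k1})² − a_{k•} ≤ 0 for all k = 1,…,K, then the LOOCV deviance D is strictly decreasing on [0, ∞): for all 0 ≤ λ₁ < λ₂ one has D(λ₂) < D(λ₁); hence its infimum is approached only as λ → ∞ and is not attained at any finite λ. -/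
open Real Set

/-- auxiliary strictly-increasing lemma for one summand, in "log difference" form -/
lemma aux_mono (b0 b1 : ℝ) (hb0 : 2 ≤ b0) (hb1 : 2 ≤ b1)
    (hq : (b0 - b1) ^ 2 ≤ b0 + b1) :
    StrictMonoOn (fun l : ℝ => b0 * Real.log (b0 - 1 + 2 * l)
      + b1 * Real.log (b1 - 1 + 2 * l)
      - (b0 + b1) * Real.log (b0 + b1 - 1 + 4 * l)) (Ici (0:ℝ)) := by
  set g : ℝ → ℝ := fun l => b0 * Real.log (b0 - 1 + 2 * l)
      + b1 * Real.log (b1 - 1 + 2 * l)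
      - (b0 + b1) * Real.log (b0 + b1 - 1 + 4 * l) with hg
  have key : ∀ l : ℝ, 0 ≤ l → HasDerivAt g
      (b0 * (2 / (b0 - 1 + 2 * l)) + b1 * (2 / (b1 - 1 + 2 * l))
        - (b0 + b1) * (4 / (b0 + b1 - 1 + 4 * l))) l := by
    intro l hl
    have hu : (0:ℝ) < b0 - 1 + 2 * l := by linarith
    have hv : (0:ℝ) < b1 - 1 + 2 * l := by linarith
    have hw : (0:ℝ) < b0 + b1 - 1 + 4 * l := by linarith
    have d1 : HasDerivAt (fun l : ℝ => b0 - 1 + 2 * l) 2 l := by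
      simpa using ((hasDerivAt_id l).const_mul 2).const_add (b0 - 1)
    have d2 : HasDerivAt (fun l : ℝ => b1 - 1 + 2 * l) 2 l := by
      simpa using ((hasDerivAt_id l).const_mul 2).const_add (b1 - 1)
    have d3 : HasDerivAt (fun l : ℝ => b0 + b1 - 1 + 4 * l) 4 l := by
      simpa using ((hasDerivAt_id l).const_mul 4).const_add (b0 + b1 - 1)
    have L1 := (Real.hasDerivAt_log hu.ne').comp l d1
    have L2 := (Real.hasDerivAt_log hv.ne').comp l d2
    have L3 := (Real.hasDerivAt_log hw.ne').comp l d3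
    have := ((L1.const_mul b0).add (L2.const_mul b1)).sub (L3.const_mul (b0 + b1))
    refine this.congr_deriv ?_
    field_simp [show b0 + b1 - 1 + l * 4 ≠ 0 by linarith]
    try ring
  apply strictMonoOn_of_deriv_pos (convex_Ici 0)
  · intro l hl
    exact (key l hl).continuousAt.continuousWithinAt
  · intro l hl
    rw [interior_Ici] at hl
    have hl' : (0:ℝ) ≤ l := le_of_lt hl
    rw [(key l hl').deriv]
    have hu : (0:ℝ) < b0 - 1 + 2 * l := by linarith
    have hv : (0:ℝ) < b1 - 1 + 2 * l := by linarith
    have hw : (0:ℝ) < b0 + b1 - 1 + 4 * l := by linarith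
    rw [show b0 * (2 / (b0 - 1 + 2 * l)) + b1 * (2 / (b1 - 1 + 2 * l))
        - (b0 + b1) * (4 / (b0 + b1 - 1 + 4 * l))
      = (2 * b0 * (b1 - 1 + 2*l) * (b0 + b1 - 1 + 4*l)
          + 2 * b1 * (b0 - 1 + 2*l) * (b0 + b1 - 1 + 4*l)
          - 4 * (b0 + b1) * (b0 - 1 + 2*l) * (b1 - 1 + 2*l))
        / ((b0 - 1 + 2*l) * (b1 - 1 + 2*l) * (b0 + b1 - 1 + 4*l)) by
        field_simp [show b0 + b1 - 1 + l * 4 ≠ 0 by linarith]]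
    apply div_pos _ (by positivity)
    nlinarith [mul_pos hu hv, sq_nonneg (b0 - b1), mul_nonneg hl' (sub_nonneg.2 hq),
      mul_nonneg (mul_nonneg hl' hl') (sub_nonneg.2 hq)]

/-- If `a_{k0}, a_{k1} > 1` and `(a_{k0} − a_{k1})² − a_{k•} ≤ 0` for all `k`, the LOOCV
deviance is strictly decreasing on `[0, ∞)`; hence its infimum is not attained at any
finite `λ`. -/
theorem stmt4 (K : ℕ) (hK : 1 ≤ K) (a0 a1 : Fin K → ℕ)
    (h : ∀ k, 1 < a0 k ∧ 1 < a1 k ∧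
      ((a0 k : ℝ) - (a1 k : ℝ)) ^ 2 - ((a0 k : ℝ) + (a1 k : ℝ)) ≤ 0) :
    (∀ l1 l2 : ℝ, 0 ≤ l1 → l1 < l2 →
      loocvDev K a0 a1 l2 < loocvDev K a0 a1 l1) ∧
    ¬ ∃ l : ℝ, 0 ≤ l ∧ ∀ l' : ℝ, 0 ≤ l' →
      loocvDev K a0 a1 l ≤ loocvDev K a0 a1 l' := by
  have hb0 : ∀ k, (2:ℝ) ≤ (a0 k : ℝ) := fun k => by exact_mod_cast (h k).1
  have hb1 : ∀ k, (2:ℝ) ≤ (a1 k : ℝ) := fun k => by exact_mod_cast (h k).2.1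
  -- rewrite summand
  have hrw : ∀ (k : Fin K) (l : ℝ), 0 ≤ l →
      ((a0 k : ℝ) * Real.log (1 - ((a1 k : ℝ) + 2 * l) / ((a0 k : ℝ) + (a1 k : ℝ) - 1 + 4 * l))
        + (a1 k : ℝ) * Real.log (((a1 k : ℝ) - 1 + 2 * l) / ((a0 k : ℝ) + (a1 k : ℝ) - 1 + 4 * l)))
      = (a0 k : ℝ) * Real.log ((a0 k : ℝ) - 1 + 2 * l)
        + (a1 k : ℝ) * Real.log ((a1 k : ℝ) - 1 + 2 * l)
        - ((a0 k : ℝ) + (a1 k : ℝ)) * Real.log ((a0 k : ℝ) + (a1 k : ℝ) - 1 + 4 * l) := by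
    intro k l hl
    have h0 := hb0 k; have h1 := hb1 k
    have hu : (0:ℝ) < (a0 k : ℝ) - 1 + 2 * l := by linarith
    have hv : (0:ℝ) < (a1 k : ℝ) - 1 + 2 * l := by linarith
    have hw : (0:ℝ) < (a0 k : ℝ) + (a1 k : ℝ) - 1 + 4 * l := by linarith
    have e1 : 1 - ((a1 k : ℝ) + 2 * l) / ((a0 k : ℝ) + (a1 k : ℝ) - 1 + 4 * l)
        = ((a0 k : ℝ) - 1 + 2 * l) / ((a0 k : ℝ) + (a1 k : ℝ) - 1 + 4 * l) := by
      field_simp [show (a0 k : ℝ) + (a1 k : ℝ) - 1 + l * 4 ≠ 0 by linarith]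
      ring
    rw [e1, Real.log_div hu.ne' hw.ne', Real.log_div hv.ne' hw.ne']
    ring
  have mono : ∀ l1 l2 : ℝ, 0 ≤ l1 → l1 < l2 →
      loocvDev K a0 a1 l2 < loocvDev K a0 a1 l1 := by
    intro l1 l2 hl1 hlt
    have hl2 : (0:ℝ) ≤ l2 := le_of_lt (lt_of_le_of_lt hl1 hlt)
    unfold loocvDev
    have hsum : ∑ k : Fin K, ((a0 k : ℝ) * Real.log (1 - ((a1 k : ℝ) + 2 * l1) / ((a0 k : ℝ) + (a1 k : ℝ) - 1 + 4 * l1))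
        + (a1 k : ℝ) * Real.log (((a1 k : ℝ) - 1 + 2 * l1) / ((a0 k : ℝ) + (a1 k : ℝ) - 1 + 4 * l1)))
      < ∑ k : Fin K, ((a0 k : ℝ) * Real.log (1 - ((a1 k : ℝ) + 2 * l2) / ((a0 k : ℝ) + (a1 k : ℝ) - 1 + 4 * l2))
        + (a1 k : ℝ) * Real.log (((a1 k : ℝ) - 1 + 2 * l2) / ((a0 k : ℝ) + (a1 k : ℝ) - 1 + 4 * l2))) := by
      apply Finset.sum_lt_sum_of_nonempty
      · exact Finset.univ_nonempty_iff.2 (Fin.pos_iff_nonempty.mp (by omega))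
      · intro k _
        rw [hrw k l1 hl1, hrw k l2 hl2]
        have := aux_mono (a0 k) (a1 k) (hb0 k) (hb1 k) (by linarith [(h k).2.2])
          (mem_Ici.2 hl1) (mem_Ici.2 hl2) hlt
        simpa using this
    linarith
  refine ⟨mono, ?_⟩
  rintro ⟨l, hl, hmin⟩
  have h1 := mono l (l + 1) hl (by linarith)
  have h2 := hmin (l + 1) (by linarith)
  linarith
end

section
/- Let K = 1 and assume a_{10} > 1, a_{11} > 1 and (a_{10} − a_{11})² − a_{1•} > 0. Then the LOOCV deviance D is uniquely minimized over [0, ∞) at λ* = ( a_{10}(a_{10} − 1) + a_{11}(a_{11} − 1) ) / ( 2( (a_{10} − a_{11})² − a_{1•} ) ): one has D(λ*) < D(λ) for every λ ≥ 0 with λ ≠ λ*. -/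
noncomputable def G (a b l : ℝ) : ℝ :=
  2 * ((a + b) * Real.log (a + b - 1 + 4 * l)
      - a * Real.log (a - 1 + 2 * l) - b * Real.log (b - 1 + 2 * l))

lemma pos_facts {a b l : ℝ} (ha : 2 ≤ a) (hb : 2 ≤ b) (hl : -1/2 < l) :
    0 < a - 1 + 2 * l ∧ 0 < b - 1 + 2 * l ∧ 0 < a + b - 1 + 4 * l := by
  refine ⟨by linarith, by linarith, by linarith⟩

noncomputable def Lstar (a b : ℝ) : ℝ :=
  (a * (a - 1) + b * (b - 1)) / (2 * ((a - b) ^ 2 - (a + b)))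

lemma G_hasDerivAt {a b : ℝ} (ha : 2 ≤ a) (hb : 2 ≤ b)
    (hΔ : 0 < (a - b) ^ 2 - (a + b)) {l : ℝ} (hl : -1/2 < l) :
    HasDerivAt (G a b)
      (8 * ((a - b) ^ 2 - (a + b)) * (l - Lstar a b)
        / ((a - 1 + 2 * l) * (b - 1 + 2 * l) * (a + b - 1 + 4 * l))) l := by
  obtain ⟨hp, hq, hs⟩ := pos_facts ha hb hl
  have h1 : HasDerivAt (fun x : ℝ => a + b - 1 + 4 * x) 4 l := by
    simpa using ((hasDerivAt_id l).const_mul 4).const_add (a + b - 1)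
  have h2 : HasDerivAt (fun x : ℝ => a - 1 + 2 * x) 2 l := by
    simpa using ((hasDerivAt_id l).const_mul 2).const_add (a - 1)
  have h3 : HasDerivAt (fun x : ℝ => b - 1 + 2 * x) 2 l := by
    simpa using ((hasDerivAt_id l).const_mul 2).const_add (b - 1)
  have hL1 : HasDerivAt (fun x : ℝ => Real.log (a + b - 1 + 4 * x))
      (4 / (a + b - 1 + 4 * l)) l := by
    simpa [div_eq_inv_mul, Function.comp_def] using (Real.hasDerivAt_log hs.ne').comp l h1
  have hL2 : HasDerivAt (fun x : ℝ => Real.log (a - 1 + 2 * x))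
      (2 / (a - 1 + 2 * l)) l := by
    simpa [div_eq_inv_mul, Function.comp_def] using (Real.hasDerivAt_log hp.ne').comp l h2
  have hL3 : HasDerivAt (fun x : ℝ => Real.log (b - 1 + 2 * x))
      (2 / (b - 1 + 2 * l)) l := by
    simpa [div_eq_inv_mul, Function.comp_def] using (Real.hasDerivAt_log hq.ne').comp l h3
  have := (((hL1.const_mul (a + b)).sub (hL2.const_mul a)).sub
      (hL3.const_mul b)).const_mul 2
  refine this.congr_deriv ?_
  rw [Lstar]
  field_simp
  ring

lemma G_strictAntiOn {a b : ℝ} (ha : 2 ≤ a) (hb : 2 ≤ b)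
    (hΔ : 0 < (a - b) ^ 2 - (a + b)) :
    StrictAntiOn (G a b) (Set.Icc 0 (Lstar a b)) := by
  have hsub : Set.Icc (0:ℝ) (Lstar a b) ⊆ Set.Ioi (-1/2 : ℝ) := fun x hx => by
    have := hx.1; simp only [Set.mem_Ioi]; linarith
  apply strictAntiOn_of_deriv_neg (convex_Icc _ _)
  · exact fun x hx => ((G_hasDerivAt ha hb hΔ (hsub hx)).continuousAt).continuousWithinAt
  · intro x hx
    rw [interior_Icc] at hx
    have hl : -1/2 < x := by have := hx.1; linarith
    obtain ⟨hp, hq, hs⟩ := pos_facts ha hb hl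
    rw [(G_hasDerivAt ha hb hΔ hl).deriv]
    apply div_neg_of_neg_of_pos
    · have : x - Lstar a b < 0 := by linarith [hx.2]
      nlinarith
    · positivity

lemma G_strictMonoOn {a b : ℝ} (ha : 2 ≤ a) (hb : 2 ≤ b)
    (hΔ : 0 < (a - b) ^ 2 - (a + b)) (hL : 0 < Lstar a b) :
    StrictMonoOn (G a b) (Set.Ici (Lstar a b)) := by
  have hsub : Set.Ici (Lstar a b) ⊆ Set.Ioi (-1/2 : ℝ) := fun x hx => by
    have := Set.mem_Ici.mp hx; simp only [Set.mem_Ioi]; linarith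
  apply strictMonoOn_of_deriv_pos (convex_Ici _)
  · exact fun x hx => ((G_hasDerivAt ha hb hΔ (hsub hx)).continuousAt).continuousWithinAt
  · intro x hx
    rw [interior_Ici] at hx
    have hxL : Lstar a b < x := hx
    have hl : -1/2 < x := by linarith
    obtain ⟨hp, hq, hs⟩ := pos_facts ha hb hl
    rw [(G_hasDerivAt ha hb hΔ hl).deriv]
    apply div_pos
    · have : 0 < x - Lstar a b := by linarith
      nlinarith
    · positivity

lemma loocv_eq_G {a10 a11 : ℕ} (h0 : 1 < a10) (h1 : 1 < a11) {l : ℝ} (hl : 0 ≤ l) :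
    loocvDev 1 (fun _ => a10) (fun _ => a11) l = G (a10 : ℝ) (a11 : ℝ) l := by
  have ha : (2:ℝ) ≤ (a10:ℝ) := by exact_mod_cast h0
  have hb : (2:ℝ) ≤ (a11:ℝ) := by exact_mod_cast h1
  obtain ⟨hp, hq, hs⟩ := pos_facts ha hb (by linarith : -1/2 < l)
  rw [loocvDev, G, Fin.sum_univ_one]
  have h1' : 1 - ((a11:ℝ) + 2 * l) / ((a10:ℝ) + (a11:ℝ) - 1 + 4 * l)
      = ((a10:ℝ) - 1 + 2 * l) / ((a10:ℝ) + (a11:ℝ) - 1 + 4 * l) := by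
    rw [eq_div_iff hs.ne', sub_mul, div_mul_cancel₀ _ hs.ne']
    ring
  rw [h1', Real.log_div hp.ne' hs.ne', Real.log_div (by linarith : (0:ℝ) < (a11:ℝ) - 1 + 2*l).ne' hs.ne']
  ring

/-- For `K = 1` with `a_{10}, a_{11} > 1` and `(a_{10} − a_{11})² − a_{1•} > 0`, the LOOCV
deviance is uniquely minimized over `[0, ∞)` at
`λ* = (a_{10}(a_{10}−1) + a_{11}(a_{11}−1)) / (2((a_{10}−a_{11})² − a_{1•}))`. -/
theorem stmt5 (a10 a11 : ℕ) (h0 : 1 < a10) (h1 : 1 < a11)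
    (hsep : 0 < ((a10 : ℝ) - (a11 : ℝ)) ^ 2 - ((a10 : ℝ) + (a11 : ℝ))) :
    ∀ l : ℝ, 0 ≤ l →
      l ≠ ((a10 : ℝ) * ((a10 : ℝ) - 1) + (a11 : ℝ) * ((a11 : ℝ) - 1)) /
          (2 * (((a10 : ℝ) - (a11 : ℝ)) ^ 2 - ((a10 : ℝ) + (a11 : ℝ)))) →
      loocvDev 1 (fun _ => a10) (fun _ => a11)
        (((a10 : ℝ) * ((a10 : ℝ) - 1) + (a11 : ℝ) * ((a11 : ℝ) - 1)) /
          (2 * (((a10 : ℝ) - (a11 : ℝ)) ^ 2 - ((a10 : ℝ) + (a11 : ℝ))))) <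
      loocvDev 1 (fun _ => a10) (fun _ => a11) l := by
  intro l hl hne
  have ha : (2:ℝ) ≤ (a10:ℝ) := by exact_mod_cast h0
  have hb : (2:ℝ) ≤ (a11:ℝ) := by exact_mod_cast h1
  have hL : 0 < Lstar (a10:ℝ) (a11:ℝ) := by
    rw [Lstar]
    apply div_pos (by nlinarith) (by linarith)
  rw [show ((a10 : ℝ) * ((a10 : ℝ) - 1) + (a11 : ℝ) * ((a11 : ℝ) - 1)) /
          (2 * (((a10 : ℝ) - (a11 : ℝ)) ^ 2 - ((a10 : ℝ) + (a11 : ℝ)))) =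
        Lstar (a10:ℝ) (a11:ℝ) from rfl] at hne ⊢
  rw [loocv_eq_G h0 h1 hl, loocv_eq_G h0 h1 hL.le]
  rcases lt_or_gt_of_ne hne with hlt | hgt
  · exact G_strictAntiOn ha hb hsep ⟨hl, hlt.le⟩ ⟨hL.le, le_refl _⟩ hlt
  · exact G_strictMonoOn ha hb hsep hL (Set.mem_Ici.mpr (le_refl _)) hgt.le hgt
end

section
/- If for every k = 1,…,K one has min(a_{k0}, a_{k1}) = 0 and max(a_{k0}, a_{k1}) = a_{k•} > 1 (complete separation in the data), then the LOOCV deviance D is strictly increasing on [0, ∞): for all 0 ≤ λ₁ < λ₂ one has D(λ₁) < D(λ₂); in particular D is uniquely minimized at λ = 0. -/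
lemma key_log_lt (c l1 l2 : ℝ) (hc : 1 ≤ c) (h1 : 0 ≤ l1) (h12 : l1 < l2) :
    Real.log ((c + 2 * l2) / (c + 4 * l2)) < Real.log ((c + 2 * l1) / (c + 4 * l1)) := by
  have h2 : 0 ≤ l2 := le_of_lt (lt_of_le_of_lt h1 h12)
  have d1 : (0:ℝ) < c + 4 * l1 := by linarith
  have d2 : (0:ℝ) < c + 4 * l2 := by linarith
  apply Real.log_lt_log
  · apply div_pos <;> linarith
  · rw [div_lt_div_iff₀ d2 d1]
    nlinarith

/-- Under complete separation (`min(a_{k0}, a_{k1}) = 0` and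
`max(a_{k0}, a_{k1}) = a_{k•} > 1` for all `k`) the LOOCV deviance is strictly increasing
on `[0, ∞)`; in particular it is uniquely minimized at `λ = 0`. -/
theorem stmt6 (K : ℕ) (hK : 1 ≤ K) (a0 a1 : Fin K → ℕ)
    (h : ∀ k, min (a0 k) (a1 k) = 0 ∧ max (a0 k) (a1 k) = a0 k + a1 k ∧
      1 < a0 k + a1 k) :
    (∀ l1 l2 : ℝ, 0 ≤ l1 → l1 < l2 →
      loocvDev K a0 a1 l1 < loocvDev K a0 a1 l2) ∧
    ∀ l : ℝ, 0 ≤ l → l ≠ 0 → loocvDev K a0 a1 0 < loocvDev K a0 a1 l := by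
  have main : ∀ l1 l2 : ℝ, 0 ≤ l1 → l1 < l2 →
      loocvDev K a0 a1 l1 < loocvDev K a0 a1 l2 := by
    intro l1 l2 h1 h12
    have h2 : 0 ≤ l2 := le_of_lt (lt_of_le_of_lt h1 h12)
    unfold loocvDev
    have hsum : ∑ k : Fin K,
        ((a0 k : ℝ) *
            Real.log (1 - ((a1 k : ℝ) + 2 * l2) / ((a0 k : ℝ) + (a1 k : ℝ) - 1 + 4 * l2)) +
         (a1 k : ℝ) *
            Real.log (((a1 k : ℝ) - 1 + 2 * l2) / ((a0 k : ℝ) + (a1 k : ℝ) - 1 + 4 * l2)))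
        < ∑ k : Fin K,
        ((a0 k : ℝ) *
            Real.log (1 - ((a1 k : ℝ) + 2 * l1) / ((a0 k : ℝ) + (a1 k : ℝ) - 1 + 4 * l1)) +
         (a1 k : ℝ) *
            Real.log (((a1 k : ℝ) - 1 + 2 * l1) / ((a0 k : ℝ) + (a1 k : ℝ) - 1 + 4 * l1))) := by
      apply Finset.sum_lt_sum_of_nonempty
      · exact Finset.univ_nonempty_iff.mpr (Fin.pos_iff_nonempty.mp (by omega))
      · intro k _
        obtain ⟨hmin, _, hsum⟩ := h k
        rcases Nat.min_eq_zero_iff.mp hmin with h0 | h0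
        · -- a0 k = 0, so a1 k ≥ 2
          have hn : 2 ≤ a1 k := by omega
          have hc : (2:ℝ) ≤ (a1 k : ℝ) := by exact_mod_cast hn
          rw [h0]
          push_cast
          have key := key_log_lt ((a1 k : ℝ) - 1) l1 l2 (by linarith) h1 h12
          have e : ∀ l : ℝ, (a1 k : ℝ) - 1 + 2 * l = ((a1 k : ℝ) - 1) + 2 * l := by
            intro l; ring
          have e2 : ∀ l : ℝ, (0:ℝ) + (a1 k : ℝ) - 1 + 4 * l = ((a1 k : ℝ) - 1) + 4 * l := by
            intro l; ring
          rw [e l1, e l2, e2 l1, e2 l2]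
          have hpos : (0:ℝ) < (a1 k : ℝ) := by linarith
          nlinarith [key, mul_lt_mul_of_pos_left key hpos]
        · -- a1 k = 0, so a0 k ≥ 2
          have hn : 2 ≤ a0 k := by omega
          have hc : (2:ℝ) ≤ (a0 k : ℝ) := by exact_mod_cast hn
          rw [h0]
          push_cast
          have key := key_log_lt ((a0 k : ℝ) - 1) l1 l2 (by linarith) h1 h12
          have harg : ∀ l : ℝ, 0 ≤ l →
              1 - ((0:ℝ) + 2 * l) / ((a0 k : ℝ) + 0 - 1 + 4 * l)
                = (((a0 k : ℝ) - 1) + 2 * l) / (((a0 k : ℝ) - 1) + 4 * l) := by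
            intro l hl
            have hd' : (a0 k : ℝ) + 0 - 1 + 4 * l > 0 := by linarith
            have hd : (a0 k : ℝ) + 0 - 1 + 4 * l ≠ 0 := ne_of_gt hd'
            have hd2 : ((a0 k : ℝ) - 1) + 4 * l ≠ 0 := by intro hz; apply hd; linarith
            rw [show (a0 k : ℝ) + 0 - 1 + 4 * l = ((a0 k : ℝ) - 1) + 4 * l by ring, eq_div_iff hd2, sub_mul, div_mul_cancel₀ _ hd2]
            ring
          rw [harg l1 h1, harg l2 h2]
          have hpos : (0:ℝ) < (a0 k : ℝ) := by linarith
          nlinarith [key, mul_lt_mul_of_pos_left key hpos]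
    linarith
  refine ⟨main, fun l hl hne => main 0 l le_rfl (lt_of_le_of_ne hl (Ne.symm hne))⟩
end

section
/- Let S = {1,…,K}, let A be the set of indices k with min(a_{k0}, a_{k1}) = 0 and max(a_{k0}, a_{k1}) = a_{k•} > 1, and let B be the set of indices k with a_{k0} > 1 and a_{k1} > 1; assume A ∪ B = S (quasi-complete separation). If Σ_{k∈B} (a_{k0}² + a_{k1}² − a_{k•}) / ( (a_{k1} − 1)(a_{k0} − 1)(a_{k•} − 1) ) > Σ_{k∈A} a_{k•} / (a_{k•} − 1), then there exists δ > 0 such that D(λ) < D(0) for all λ ∈ (0, δ); in particular the LOOCV deviance is not minimized at λ = 0. -/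
noncomputable def dterm (b0 b1 : ℝ) : ℝ :=
  b0 * (2 / (b0 - 1) - 4 / (b0 + b1 - 1)) + b1 * (2 / (b1 - 1) - 4 / (b0 + b1 - 1))

lemma key (b0 b1 : ℝ) (h0 : b0 - 1 ≠ 0) (h1 : b1 - 1 ≠ 0) (hs : b0 + b1 - 1 ≠ 0) :
    HasDerivAt (fun l : ℝ =>
      b0 * Real.log (1 - (b1 + 2 * l) / (b0 + b1 - 1 + 4 * l)) +
      b1 * Real.log ((b1 - 1 + 2 * l) / (b0 + b1 - 1 + 4 * l)))
    (dterm b0 b1) 0 := by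
  have hD : HasDerivAt (fun l : ℝ => b0 + b1 - 1 + 4 * l) 4 0 := by
    simpa using ((hasDerivAt_id (0:ℝ)).const_mul 4).const_add (b0 + b1 - 1)
  have hD0 : (b0 + b1 - 1 + 4 * (0:ℝ)) ≠ 0 := by simpa using hs
  have hN1 : HasDerivAt (fun l : ℝ => b1 + 2 * l) 2 0 := by
    simpa using ((hasDerivAt_id (0:ℝ)).const_mul 2).const_add b1
  have hN2 : HasDerivAt (fun l : ℝ => b1 - 1 + 2 * l) 2 0 := by
    simpa using ((hasDerivAt_id (0:ℝ)).const_mul 2).const_add (b1 - 1)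
  have hq1 := hN1.div hD hD0
  have hg1 := (hasDerivAt_const (0:ℝ) (1:ℝ)).sub hq1
  have hq2 := hN2.div hD hD0
  have hg10 : (1 : ℝ) - (b1 + 2 * (0:ℝ)) / (b0 + b1 - 1 + 4 * (0:ℝ)) = (b0 - 1) / (b0 + b1 - 1) := by
    simp only [mul_zero, add_zero]
    rw [eq_div_iff hs, sub_mul, div_mul_cancel₀ _ hs]
    ring
  have hg1ne : (1 : ℝ) - (b1 + 2 * (0:ℝ)) / (b0 + b1 - 1 + 4 * (0:ℝ)) ≠ 0 := by
    rw [hg10]; exact div_ne_zero h0 hs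
  have hg20 : (b1 - 1 + 2 * (0:ℝ)) / (b0 + b1 - 1 + 4 * (0:ℝ)) = (b1 - 1) / (b0 + b1 - 1) := by
    norm_num
  have hg2ne : (b1 - 1 + 2 * (0:ℝ)) / (b0 + b1 - 1 + 4 * (0:ℝ)) ≠ 0 := by
    rw [hg20]; exact div_ne_zero h1 hs
  have h := ((hg1.log hg1ne).const_mul b0).add ((hq2.log hg2ne).const_mul b1)
  refine h.congr_deriv ?_
  simp only [Pi.sub_apply, Pi.div_apply]
  rw [hg10] at *
  rw [hg20] at *
  simp only [mul_zero, add_zero]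
  unfold dterm
  field_simp
  ring

lemma dtermA0 (b1 : ℝ) (h1 : b1 - 1 ≠ 0) :
    dterm 0 b1 = -2 * ((0 + b1) / (0 + b1 - 1)) := by
  unfold dterm
  simp only [zero_add, zero_mul]
  field_simp
  ring

lemma dtermA1 (b0 : ℝ) (h0 : b0 - 1 ≠ 0) :
    dterm b0 0 = -2 * ((b0 + 0) / (b0 + 0 - 1)) := by
  unfold dterm
  simp only [add_zero, zero_mul]
  field_simp
  ring

lemma dtermB (b0 b1 : ℝ) (h0 : b0 - 1 ≠ 0) (h1 : b1 - 1 ≠ 0) (hs : b0 + b1 - 1 ≠ 0) :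
    dterm b0 b1 = 2 * ((b0 ^ 2 + b1 ^ 2 - (b0 + b1)) / ((b1 - 1) * (b0 - 1) * (b0 + b1 - 1))) := by
  unfold dterm
  field_simp
  ring



/-- Quasi-complete separation: with `A` the set of separated categories and `B` the set of
categories with both counts `> 1`, `A ∪ B = S`, if the stated sum inequality holds then
the LOOCV deviance is strictly below `D(0)` on a right-neighborhood of `0`; in particular
it is not minimized at `λ = 0`. -/
theorem stmt7 (K : ℕ) (hK : 1 ≤ K) (a0 a1 : Fin K → ℕ) (A B : Finset (Fin K))
    (hA : ∀ k, k ∈ A ↔ (min (a0 k) (a1 k) = 0 ∧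
      max (a0 k) (a1 k) = a0 k + a1 k ∧ 1 < a0 k + a1 k))
    (hB : ∀ k, k ∈ B ↔ (1 < a0 k ∧ 1 < a1 k))
    (hcover : A ∪ B = Finset.univ)
    (hsum : ∑ k ∈ A, ((a0 k : ℝ) + (a1 k : ℝ)) / ((a0 k : ℝ) + (a1 k : ℝ) - 1) <
            ∑ k ∈ B, ((a0 k : ℝ) ^ 2 + (a1 k : ℝ) ^ 2 - ((a0 k : ℝ) + (a1 k : ℝ))) /
              (((a1 k : ℝ) - 1) * ((a0 k : ℝ) - 1) * ((a0 k : ℝ) + (a1 k : ℝ) - 1))) :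
    (∃ δ : ℝ, 0 < δ ∧ ∀ l : ℝ, 0 < l → l < δ →
      loocvDev K a0 a1 l < loocvDev K a0 a1 0) ∧
    ¬ (∀ l : ℝ, 0 ≤ l → loocvDev K a0 a1 0 ≤ loocvDev K a0 a1 l) := by
  have hkfacts : ∀ k : Fin K, a0 k ≠ 1 ∧ a1 k ≠ 1 ∧ 1 < a0 k + a1 k := by
    intro k
    have hk : k ∈ A ∪ B := hcover ▸ Finset.mem_univ k
    rcases Finset.mem_union.mp hk with h | h
    · obtain ⟨hmin, hmax, hgt⟩ := (hA k).mp h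
      omega
    · obtain ⟨h0, h1⟩ := (hB k).mp h
      omega
  have hr0 : ∀ k : Fin K, ((a0 k : ℝ) - 1) ≠ 0 := fun k =>
    sub_ne_zero.mpr (by exact_mod_cast (hkfacts k).1)
  have hr1 : ∀ k : Fin K, ((a1 k : ℝ) - 1) ≠ 0 := fun k =>
    sub_ne_zero.mpr (by exact_mod_cast (hkfacts k).2.1)
  have hrs : ∀ k : Fin K, ((a0 k : ℝ) + (a1 k : ℝ) - 1) ≠ 0 := by
    intro k
    have h := (hkfacts k).2.2
    have h' : (1 : ℝ) < (a0 k : ℝ) + (a1 k : ℝ) := by exact_mod_cast h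
    exact sub_ne_zero.mpr (ne_of_gt h')
  -- derivative of loocvDev at 0
  have hder : HasDerivAt (loocvDev K a0 a1)
      (-2 * ∑ k : Fin K, dterm (a0 k) (a1 k)) 0 := by
    have h := HasDerivAt.fun_sum
      (fun k (_ : k ∈ Finset.univ) => key (a0 k) (a1 k) (hr0 k) (hr1 k) (hrs k))
    have h2 := h.const_mul (-2 : ℝ)
    unfold loocvDev
    exact h2
  -- the derivative is negative
  have hdisj : Disjoint A B := by
    rw [Finset.disjoint_left]
    intro k hkA hkB
    have h1 := (hA k).mp hkA
    have h2 := (hB k).mp hkB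
    omega
  have hsplit : ∑ k : Fin K, dterm (a0 k) (a1 k) =
      ∑ k ∈ A, dterm (a0 k) (a1 k) + ∑ k ∈ B, dterm (a0 k) (a1 k) := by
    rw [← Finset.sum_union hdisj, hcover]
  have hAeq : ∑ k ∈ A, dterm (a0 k) (a1 k) =
      ∑ k ∈ A, (-2 * (((a0 k : ℝ) + (a1 k : ℝ)) / ((a0 k : ℝ) + (a1 k : ℝ) - 1))) := by
    refine Finset.sum_congr rfl (fun k hk => ?_)
    obtain ⟨hmin, hmax, hgt⟩ := (hA k).mp hk
    rcases Nat.min_eq_zero_iff.mp hmin with h | h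
    · have h0 : (a0 k : ℝ) = 0 := by rw [h]; norm_num
      rw [h0]
      exact dtermA0 _ (hr1 k)
    · have h1 : (a1 k : ℝ) = 0 := by rw [h]; norm_num
      rw [h1]
      exact dtermA1 _ (hr0 k)
  have hBeq : ∑ k ∈ B, dterm (a0 k) (a1 k) =
      ∑ k ∈ B, (2 * (((a0 k : ℝ) ^ 2 + (a1 k : ℝ) ^ 2 - ((a0 k : ℝ) + (a1 k : ℝ))) /
        (((a1 k : ℝ) - 1) * ((a0 k : ℝ) - 1) * ((a0 k : ℝ) + (a1 k : ℝ) - 1)))) :=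
    Finset.sum_congr rfl (fun k _ => dtermB _ _ (hr0 k) (hr1 k) (hrs k))
  have hpos : 0 < ∑ k : Fin K, dterm (a0 k) (a1 k) := by
    rw [hsplit, hAeq, hBeq, ← Finset.mul_sum, ← Finset.mul_sum]
    linarith
  have hc : (-2 * ∑ k : Fin K, dterm (a0 k) (a1 k)) < 0 := by linarith
  -- slope argument
  have hsl := hasDerivAt_iff_tendsto_slope.mp hder
  have hev : ∀ᶠ l in nhdsWithin (0:ℝ) {(0:ℝ)}ᶜ,
      slope (loocvDev K a0 a1) 0 l < 0 := hsl.eventually_lt_const hc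
  have hev' : ∀ᶠ l in nhdsWithin (0:ℝ) (Set.Ioi 0),
      slope (loocvDev K a0 a1) 0 l < 0 :=
    hev.filter_mono (nhdsWithin_mono 0
      (fun x hx => Set.mem_compl_singleton_iff.mpr (ne_of_gt hx)))
  obtain ⟨ε, hε, hball⟩ := Metric.mem_nhdsWithin_iff.mp hev'
  have hmain : ∃ δ : ℝ, 0 < δ ∧ ∀ l : ℝ, 0 < l → l < δ →
      loocvDev K a0 a1 l < loocvDev K a0 a1 0 := by
    refine ⟨ε, hε, fun l hl hlδ => ?_⟩
    have hmem : l ∈ Metric.ball (0:ℝ) ε ∩ Set.Ioi 0 :=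
      ⟨by simpa [Real.dist_eq, abs_of_pos hl] using hlδ, hl⟩
    have hs : slope (loocvDev K a0 a1) 0 l < 0 := hball hmem
    rw [slope_def_field] at hs
    have hs' : (loocvDev K a0 a1 l - loocvDev K a0 a1 0) / l < 0 := by simpa using hs
    rcases div_neg_iff.mp hs' with ⟨_, h2⟩ | ⟨h1, _⟩
    · linarith
    · linarith
  refine ⟨hmain, fun hmin => ?_⟩
  obtain ⟨δ, hδ, h⟩ := hmain
  exact absurd (hmin (δ/2) (by linarith))
    (not_le.mpr (h (δ/2) (by linarith) (by linarith)))
end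

section
/- Let K = 2 with distinct indices k, l ∈ {1,2}. Assume min(a_{k0}, a_{k1}) = 0 with max(a_{k0}, a_{k1}) = a_{k•} > 1, and a_{l0} = a_{l1} > 1. If any of the following holds: (i) a_{k•} > 2, a_{l•} < a_{k•}(a_{k•} − 1) and a_{k•}(a_{l•}/2 − 1)(a_{l•} − 1) ≥ a_{l•}(a_{k•} − 1); (ii) a_{k•} > 2 and a_{l•} ≥ a_{k•}(a_{k•} − 1); (iii) a_{k•} = 2 and a_{l•} > 4; then the LOOCV deviance is minimized at λ = 0, i.e. D(0) ≤ D(λ) for all λ ≥ 0. -/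
lemma pade_low {x : ℝ} (hx : 1 ≤ x) : 3*(x^2-1)/(x^2+4*x+1) ≤ Real.log x := by
  have key : ∀ t : ℝ, 0 < t →
      HasDerivAt (fun t : ℝ => Real.log t - 3*(t^2-1)/(t^2+4*t+1))
        ((t-1)^4/(t*(t^2+4*t+1)^2)) t := by
    intro t ht
    have hq : (0:ℝ) < t^2+4*t+1 := by nlinarith
    have h1 : HasDerivAt (fun t : ℝ => 3*(t^2-1)) (3*(2*t^1)) t := by
      simpa using ((hasDerivAt_pow 2 t).sub_const 1).const_mul 3
    have h2 : HasDerivAt (fun t : ℝ => t^2+4*t+1) (2*t^1+4) t := by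
      have := ((hasDerivAt_pow 2 t).add ((hasDerivAt_id t).const_mul 4)).add_const 1
      simpa using this
    have H := (Real.hasDerivAt_log (ne_of_gt ht)).sub (h1.div h2 (ne_of_gt hq))
    refine H.congr_deriv ?_
    field_simp
    ring
  have mono : MonotoneOn (fun t : ℝ => Real.log t - 3*(t^2-1)/(t^2+4*t+1)) (Set.Ici 1) := by
    apply monotoneOn_of_deriv_nonneg (convex_Ici 1)
    · intro t ht
      have ht0 : (0:ℝ) < t := lt_of_lt_of_le one_pos ht
      exact (key t ht0).continuousAt.continuousWithinAt
    · intro t ht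
      rw [interior_Ici] at ht
      exact (key t (lt_trans one_pos ht)).differentiableAt.differentiableWithinAt
    · intro t ht
      rw [interior_Ici] at ht
      have ht0 : (0:ℝ) < t := lt_trans one_pos ht
      rw [(key t ht0).deriv]
      have hq : (0:ℝ) < t^2+4*t+1 := by nlinarith
      exact div_nonneg (by positivity) (mul_pos ht0 (pow_pos hq 2)).le
  have h1' := mono (Set.mem_Ici.mpr le_rfl) (Set.mem_Ici.mpr hx) hx
  norm_num at h1'
  linarith

lemma pade_up {x : ℝ} (hx : 1 ≤ x) : Real.log x ≤ (x-1)*(x+5)/(2*(2*x+1)) := by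
  have key : ∀ t : ℝ, 0 < t →
      HasDerivAt (fun t : ℝ => (t-1)*(t+5)/(2*(2*t+1)) - Real.log t)
        (4*(t-1)^3/(t*(2*(2*t+1))^2)) t := by
    intro t ht
    have hq : (0:ℝ) < 2*(2*t+1) := by nlinarith
    have h1 : HasDerivAt (fun t : ℝ => (t-1)*(t+5)) (1*(t+5)+(t-1)*1) t :=
      ((hasDerivAt_id t).sub_const 1).mul ((hasDerivAt_id t).add_const 5)
    have h2 : HasDerivAt (fun t : ℝ => 2*(2*t+1)) (2*(2*1)) t := by
      simpa using (((hasDerivAt_id t).const_mul 2).add_const 1).const_mul 2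
    have H := (h1.div h2 (ne_of_gt hq)).sub (Real.hasDerivAt_log (ne_of_gt ht))
    refine H.congr_deriv ?_
    field_simp
    ring
  have mono : MonotoneOn (fun t : ℝ => (t-1)*(t+5)/(2*(2*t+1)) - Real.log t) (Set.Ici 1) := by
    apply monotoneOn_of_deriv_nonneg (convex_Ici 1)
    · intro t ht
      have ht0 : (0:ℝ) < t := lt_of_lt_of_le one_pos ht
      exact (key t ht0).continuousAt.continuousWithinAt
    · intro t ht
      rw [interior_Ici] at ht
      exact (key t (lt_trans one_pos ht)).differentiableAt.differentiableWithinAt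
    · intro t ht
      rw [interior_Ici] at ht
      have ht0 : (0:ℝ) < t := lt_trans one_pos ht
      rw [(key t ht0).deriv]
      have ht1 : 1 < t := ht
      have hq : (0:ℝ) < 2*(2*t+1) := by nlinarith
      have hn : (0:ℝ) ≤ (t-1)^3 := pow_nonneg (by linarith) 3
      exact div_nonneg (by linarith) (mul_pos ht0 (pow_pos hq 2)).le
  have h1' := mono (Set.mem_Ici.mpr le_rfl) (Set.mem_Ici.mpr hx) hx
  norm_num at h1'
  linarith



lemma pade_up_div {p q : ℝ} (hq : 0 < q) (hpq : q ≤ p) :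
    Real.log (p/q) ≤ (p-q)*(p+5*q)/(2*q*(2*p+q)) := by
  have hx : 1 ≤ p/q := (one_le_div hq).mpr hpq
  have h := pade_up hx
  have he : (p/q-1)*(p/q+5)/(2*(2*(p/q)+1)) = (p-q)*(p+5*q)/(2*q*(2*p+q)) := by
    have h2 : (0:ℝ) < 2*p+q := by linarith
    field_simp
  linarith [he ▸ h]

lemma pade_low_div {p q : ℝ} (hq : 0 < q) (hpq : q ≤ p) :
    3*(p^2-q^2)/(p^2+4*p*q+q^2) ≤ Real.log (p/q) := by
  have hx : 1 ≤ p/q := (one_le_div hq).mpr hpq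
  have h := pade_low hx
  have h2 : (0:ℝ) < p^2+4*p*q+q^2 := by nlinarith
  have h4 : (0:ℝ) < (p/q)^2+4*(p/q)+1 := by nlinarith [hx]
  have he : 3*((p/q)^2-1)/((p/q)^2+4*(p/q)+1) = 3*(p^2-q^2)/(p^2+4*p*q+q^2) := by
    rw [div_eq_div_iff h4.ne' h2.ne', div_pow]
    field_simp
  linarith [he ▸ h]

lemma log_div_le {p q : ℝ} (hq : 0 < q) (hp : 0 < p) :
    Real.log (p/q) ≤ (p-q)/q := by
  have := Real.log_le_sub_one_of_pos (div_pos hp hq)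
  have he : p/q - 1 = (p-q)/q := by field_simp
  linarith
lemma le_log_div {p q : ℝ} (hq : 0 < q) (hp : 0 < p) :
    (p-q)/p ≤ Real.log (p/q) := by
  have := Real.one_sub_inv_le_log_of_pos (div_pos hp hq)
  have he : 1 - (p/q)⁻¹ = (p-q)/p := by
    rw [inv_div]; field_simp
  linarith

set_option maxHeartbeats 1000000 in
lemma core (n m lam : ℝ) (hn : 2 ≤ n) (hm : 2 ≤ m) (hlam : 0 ≤ lam)
    (hc : (2*m*(n-1) ≤ n*(m-1)*(2*m-1) ∧ 2*m ≤ n*(m-1)) ∨ (n = 3 ∧ m = 2) ∨ (n = 2 ∧ 3 ≤ m)) :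
    n * Real.log ((n-1+2*lam)/(n-1+4*lam)) + 2*m*Real.log ((m-1+2*lam)/(2*m-1+4*lam)) ≤
      2*m*Real.log ((m-1)/(2*m-1)) := by
  have ha1 : (0:ℝ) < n-1+2*lam := by linarith
  have ha2 : (0:ℝ) < n-1+4*lam := by linarith
  have hb1 : (0:ℝ) < m-1+2*lam := by linarith
  have hb2 : (0:ℝ) < 2*m-1+4*lam := by linarith
  have hc1 : (0:ℝ) < m-1 := by linarith
  have hc2 : (0:ℝ) < 2*m-1 := by linarith
  have hq : (0:ℝ) < (m-1)*(2*m-1+4*lam) := mul_pos hc1 hb2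
  have hp : (0:ℝ) < (m-1+2*lam)*(2*m-1) := mul_pos hb1 hc2
  have hqp : (m-1)*(2*m-1+4*lam) ≤ (m-1+2*lam)*(2*m-1) := by nlinarith
  -- reduce to 2*m*log X ≤ n*log W
  have key : 2*m*Real.log (((m-1+2*lam)*(2*m-1))/((m-1)*(2*m-1+4*lam))) ≤
      n*Real.log ((n-1+4*lam)/(n-1+2*lam)) := by
    rcases hc with ⟨h1, h2⟩ | ⟨hn3, hm2⟩ | ⟨hn2, hm3⟩
    · -- branch A
      have hXle : Real.log (((m-1+2*lam)*(2*m-1))/((m-1)*(2*m-1+4*lam))) ≤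
          ((m-1+2*lam)*(2*m-1)-(m-1)*(2*m-1+4*lam))/((m-1)*(2*m-1+4*lam)) :=
        log_div_le hq hp
      have hWge : ((n-1+4*lam)-(n-1+2*lam))/(n-1+4*lam) ≤
          Real.log ((n-1+4*lam)/(n-1+2*lam)) := le_log_div ha1 ha2
      have hmid : 2*m*(((m-1+2*lam)*(2*m-1)-(m-1)*(2*m-1+4*lam))/((m-1)*(2*m-1+4*lam))) ≤
          n*(((n-1+4*lam)-(n-1+2*lam))/(n-1+4*lam)) := by
        rw [show 2*m*(((m-1+2*lam)*(2*m-1)-(m-1)*(2*m-1+4*lam))/((m-1)*(2*m-1+4*lam)))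
              = (2*m*((m-1+2*lam)*(2*m-1)-(m-1)*(2*m-1+4*lam)))/((m-1)*(2*m-1+4*lam)) by ring,
            show n*(((n-1+4*lam)-(n-1+2*lam))/(n-1+4*lam))
              = (n*((n-1+4*lam)-(n-1+2*lam)))/(n-1+4*lam) by ring,
            div_le_div_iff₀ hq ha2]
        nlinarith [mul_nonneg hlam (sub_nonneg.mpr h1),
          mul_nonneg (mul_nonneg hlam hlam) (sub_nonneg.mpr h2)]
      calc 2*m*Real.log (((m-1+2*lam)*(2*m-1))/((m-1)*(2*m-1+4*lam)))
          ≤ 2*m*(((m-1+2*lam)*(2*m-1)-(m-1)*(2*m-1+4*lam))/((m-1)*(2*m-1+4*lam))) :=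
            mul_le_mul_of_nonneg_left hXle (by linarith)
        _ ≤ n*(((n-1+4*lam)-(n-1+2*lam))/(n-1+4*lam)) := hmid
        _ ≤ n*Real.log ((n-1+4*lam)/(n-1+2*lam)) :=
            mul_le_mul_of_nonneg_left hWge (by linarith)
    · -- branch B : n = 3, m = 2
      subst hn3 hm2
      have hXle : Real.log (((2-1+2*lam)*(2*2-1))/((2-1)*(2*2-1+4*lam))) ≤
          ((2-1+2*lam)*(2*2-1)-(2-1)*(2*2-1+4*lam))*((2-1+2*lam)*(2*2-1)+5*((2-1)*(2*2-1+4*lam)))/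
            (2*((2-1)*(2*2-1+4*lam))*(2*((2-1+2*lam)*(2*2-1))+(2-1)*(2*2-1+4*lam))) :=
        pade_up_div hq hqp
      have hWge : 3*((3-1+4*lam)^2-(3-1+2*lam)^2)/((3-1+4*lam)^2+4*(3-1+4*lam)*(3-1+2*lam)+(3-1+2*lam)^2) ≤
          Real.log ((3-1+4*lam)/(3-1+2*lam)) := pade_low_div ha1 (by linarith)
      have hmid : 2*2*(((2-1+2*lam)*(2*2-1)-(2-1)*(2*2-1+4*lam))*((2-1+2*lam)*(2*2-1)+5*((2-1)*(2*2-1+4*lam)))/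
            (2*((2-1)*(2*2-1+4*lam))*(2*((2-1+2*lam)*(2*2-1))+(2-1)*(2*2-1+4*lam)))) ≤
          3*(3*((3-1+4*lam)^2-(3-1+2*lam)^2)/((3-1+4*lam)^2+4*(3-1+4*lam)*(3-1+2*lam)+(3-1+2*lam)^2)) := by
        rw [show 2*2*(((2-1+2*lam)*(2*2-1)-(2-1)*(2*2-1+4*lam))*((2-1+2*lam)*(2*2-1)+5*((2-1)*(2*2-1+4*lam)))/
              (2*((2-1)*(2*2-1+4*lam))*(2*((2-1+2*lam)*(2*2-1))+(2-1)*(2*2-1+4*lam))))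
            = (2*2*(((2-1+2*lam)*(2*2-1)-(2-1)*(2*2-1+4*lam))*((2-1+2*lam)*(2*2-1)+5*((2-1)*(2*2-1+4*lam)))))/
              (2*((2-1)*(2*2-1+4*lam))*(2*((2-1+2*lam)*(2*2-1))+(2-1)*(2*2-1+4*lam))) by ring,
            show 3*(3*((3-1+4*lam)^2-(3-1+2*lam)^2)/((3-1+4*lam)^2+4*(3-1+4*lam)*(3-1+2*lam)+(3-1+2*lam)^2))
            = (3*(3*((3-1+4*lam)^2-(3-1+2*lam)^2)))/((3-1+4*lam)^2+4*(3-1+4*lam)*(3-1+2*lam)+(3-1+2*lam)^2) by ring,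
            div_le_div_iff₀ (by nlinarith) (by nlinarith)]
        linarith [hlam, pow_nonneg hlam 2, pow_nonneg hlam 3, pow_nonneg hlam 4]
      calc 2*2*Real.log (((2-1+2*lam)*(2*2-1))/((2-1)*(2*2-1+4*lam)))
          ≤ 2*2*(((2-1+2*lam)*(2*2-1)-(2-1)*(2*2-1+4*lam))*((2-1+2*lam)*(2*2-1)+5*((2-1)*(2*2-1+4*lam)))/
            (2*((2-1)*(2*2-1+4*lam))*(2*((2-1+2*lam)*(2*2-1))+(2-1)*(2*2-1+4*lam)))) :=
            mul_le_mul_of_nonneg_left hXle (by norm_num)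
        _ ≤ 3*(3*((3-1+4*lam)^2-(3-1+2*lam)^2)/((3-1+4*lam)^2+4*(3-1+4*lam)*(3-1+2*lam)+(3-1+2*lam)^2)) := hmid
        _ ≤ 3*Real.log ((3-1+4*lam)/(3-1+2*lam)) := by linarith
    · -- branch C : n = 2, m ≥ 3
      subst hn2
      have hXle : Real.log (((m-1+2*lam)*(2*m-1))/((m-1)*(2*m-1+4*lam))) ≤
          ((m-1+2*lam)*(2*m-1)-(m-1)*(2*m-1+4*lam))*((m-1+2*lam)*(2*m-1)+5*((m-1)*(2*m-1+4*lam)))/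
            (2*((m-1)*(2*m-1+4*lam))*(2*((m-1+2*lam)*(2*m-1))+(m-1)*(2*m-1+4*lam))) :=
        pade_up_div hq hqp
      have hWge : 3*((2-1+4*lam)^2-(2-1+2*lam)^2)/((2-1+4*lam)^2+4*(2-1+4*lam)*(2-1+2*lam)+(2-1+2*lam)^2) ≤
          Real.log ((2-1+4*lam)/(2-1+2*lam)) := pade_low_div ha1 (by linarith)
      have hmid : 2*m*(((m-1+2*lam)*(2*m-1)-(m-1)*(2*m-1+4*lam))*((m-1+2*lam)*(2*m-1)+5*((m-1)*(2*m-1+4*lam)))/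
            (2*((m-1)*(2*m-1+4*lam))*(2*((m-1+2*lam)*(2*m-1))+(m-1)*(2*m-1+4*lam)))) ≤
          2*(3*((2-1+4*lam)^2-(2-1+2*lam)^2)/((2-1+4*lam)^2+4*(2-1+4*lam)*(2-1+2*lam)+(2-1+2*lam)^2)) := by
        rw [show 2*m*(((m-1+2*lam)*(2*m-1)-(m-1)*(2*m-1+4*lam))*((m-1+2*lam)*(2*m-1)+5*((m-1)*(2*m-1+4*lam)))/
              (2*((m-1)*(2*m-1+4*lam))*(2*((m-1+2*lam)*(2*m-1))+(m-1)*(2*m-1+4*lam))))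
            = (2*m*(((m-1+2*lam)*(2*m-1)-(m-1)*(2*m-1+4*lam))*((m-1+2*lam)*(2*m-1)+5*((m-1)*(2*m-1+4*lam)))))/
              (2*((m-1)*(2*m-1+4*lam))*(2*((m-1+2*lam)*(2*m-1))+(m-1)*(2*m-1+4*lam))) by ring,
            show 2*(3*((2-1+4*lam)^2-(2-1+2*lam)^2)/((2-1+4*lam)^2+4*(2-1+4*lam)*(2-1+2*lam)+(2-1+2*lam)^2))
            = (2*(3*((2-1+4*lam)^2-(2-1+2*lam)^2)))/((2-1+4*lam)^2+4*(2-1+4*lam)*(2-1+2*lam)+(2-1+2*lam)^2) by ring,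
            div_le_div_iff₀ (by nlinarith) (by nlinarith)]
        have ha : (0:ℝ) ≤ m - 3 := by linarith
        linarith [mul_nonneg (pow_nonneg ha 0) (pow_nonneg hlam 1),
          mul_nonneg (pow_nonneg ha 0) (pow_nonneg hlam 2),
          mul_nonneg (pow_nonneg ha 0) (pow_nonneg hlam 3),
          mul_nonneg (pow_nonneg ha 0) (pow_nonneg hlam 4),
          mul_nonneg (pow_nonneg ha 1) (pow_nonneg hlam 1),
          mul_nonneg (pow_nonneg ha 1) (pow_nonneg hlam 2),
          mul_nonneg (pow_nonneg ha 1) (pow_nonneg hlam 3),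
          mul_nonneg (pow_nonneg ha 1) (pow_nonneg hlam 4),
          mul_nonneg (pow_nonneg ha 2) (pow_nonneg hlam 1),
          mul_nonneg (pow_nonneg ha 2) (pow_nonneg hlam 2),
          mul_nonneg (pow_nonneg ha 2) (pow_nonneg hlam 3),
          mul_nonneg (pow_nonneg ha 2) (pow_nonneg hlam 4),
          mul_nonneg (pow_nonneg ha 3) (pow_nonneg hlam 1),
          mul_nonneg (pow_nonneg ha 3) (pow_nonneg hlam 2),
          mul_nonneg (pow_nonneg ha 3) (pow_nonneg hlam 3),
          mul_nonneg (pow_nonneg ha 4) (pow_nonneg hlam 1),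
          mul_nonneg (pow_nonneg ha 4) (pow_nonneg hlam 2)]
      calc 2*m*Real.log (((m-1+2*lam)*(2*m-1))/((m-1)*(2*m-1+4*lam)))
          ≤ 2*m*(((m-1+2*lam)*(2*m-1)-(m-1)*(2*m-1+4*lam))*((m-1+2*lam)*(2*m-1)+5*((m-1)*(2*m-1+4*lam)))/
            (2*((m-1)*(2*m-1+4*lam))*(2*((m-1+2*lam)*(2*m-1))+(m-1)*(2*m-1+4*lam)))) :=
            mul_le_mul_of_nonneg_left hXle (by linarith)
        _ ≤ 2*(3*((2-1+4*lam)^2-(2-1+2*lam)^2)/((2-1+4*lam)^2+4*(2-1+4*lam)*(2-1+2*lam)+(2-1+2*lam)^2)) := hmid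
        _ ≤ 2*Real.log ((2-1+4*lam)/(2-1+2*lam)) := by linarith
  rw [Real.log_div (ne_of_gt hp) (ne_of_gt hq), Real.log_mul (ne_of_gt hb1) (ne_of_gt hc2),
    Real.log_mul (ne_of_gt hc1) (ne_of_gt hb2),
    Real.log_div (ne_of_gt ha2) (ne_of_gt ha1)] at key
  rw [Real.log_div (ne_of_gt ha1) (ne_of_gt ha2), Real.log_div (ne_of_gt hb1) (ne_of_gt hb2),
    Real.log_div (ne_of_gt hc1) (ne_of_gt hc2)]
  linarith [key]

noncomputable def termExpr (z0 z1 : ℕ) (mu : ℝ) : ℝ :=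
  (z0:ℝ) * Real.log (1 - ((z1:ℝ)+2*mu)/((z0:ℝ)+(z1:ℝ)-1+4*mu)) +
  (z1:ℝ) * Real.log (((z1:ℝ)-1+2*mu)/((z0:ℝ)+(z1:ℝ)-1+4*mu))

lemma term_k (z0 z1 : ℕ) (hmin : min z0 z1 = 0) (hn : 1 < z0 + z1) (mu : ℝ) (hmu : 0 ≤ mu) :
    termExpr z0 z1 mu =
      ((z0+z1 : ℕ):ℝ) * Real.log ((((z0+z1:ℕ):ℝ)-1+2*mu)/(((z0+z1:ℕ):ℝ)-1+4*mu)) := by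
  rcases Nat.min_eq_zero_iff.mp hmin with h0 | h0 <;> subst h0 <;> unfold termExpr
  · push_cast
    norm_num
  · have hz : (2:ℝ) ≤ (z0:ℝ) := by exact_mod_cast (by omega : 2 ≤ z0)
    have hden : ((z0:ℝ) - 1 + 4*mu) ≠ 0 := by nlinarith
    have harg : (1 : ℝ) - 2*mu/((z0:ℝ)-1+4*mu)
        = ((z0:ℝ)-1+2*mu)/((z0:ℝ)-1+4*mu) := by
      rw [one_sub_div hden]; ring_nf
    push_cast
    norm_num
    left
    rw [harg]

lemma term_l (z : ℕ) (hm : 1 < z) (mu : ℝ) (hmu : 0 ≤ mu) :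
    termExpr z z mu = 2*(z:ℝ)*Real.log (((z:ℝ)-1+2*mu)/(2*(z:ℝ)-1+4*mu)) := by
  unfold termExpr
  have hz : (2:ℝ) ≤ (z:ℝ) := by exact_mod_cast hm
  have hden : ((z:ℝ) + (z:ℝ) - 1 + 4*mu) ≠ 0 := by nlinarith
  rw [show (1 : ℝ) - ((z:ℝ)+2*mu)/((z:ℝ)+(z:ℝ)-1+4*mu)
      = ((z:ℝ)-1+2*mu)/((z:ℝ)+(z:ℝ)-1+4*mu) by rw [one_sub_div hden]; ring,
    show ((z:ℝ)+(z:ℝ)-1+4*mu) = 2*(z:ℝ)-1+4*mu by ring]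
  ring

lemma aux (x0 x1 y0 y1 : ℕ) (hmin : min x0 x1 = 0) (hn : 1 < x0 + x1)
    (heq : y0 = y1) (hm : 1 < y0)
    (hcond : (2 < x0 + x1 ∧ y0 + y1 < (x0 + x1) * (x0 + x1 - 1) ∧
        ((y0 : ℝ) + (y1 : ℝ)) * (((x0 : ℝ) + (x1 : ℝ)) - 1) ≤
          ((x0 : ℝ) + (x1 : ℝ)) * (((y0 : ℝ) + (y1 : ℝ)) / 2 - 1) *
            (((y0 : ℝ) + (y1 : ℝ)) - 1)) ∨
      (2 < x0 + x1 ∧ (x0 + x1) * (x0 + x1 - 1) ≤ y0 + y1) ∨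
      (x0 + x1 = 2 ∧ 4 < y0 + y1))
    (lam : ℝ) (hlam : 0 ≤ lam) :
    -2 * (termExpr x0 x1 0 + termExpr y0 y1 0) ≤
      -2 * (termExpr x0 x1 lam + termExpr y0 y1 lam) := by
  subst heq
  set N := x0 + x1 with hN
  have hN2 : 2 ≤ N := hn
  have hM2 : 2 ≤ y0 := hm
  have hNr : (2:ℝ) ≤ (N:ℝ) := by exact_mod_cast hN2
  have hMr : (2:ℝ) ≤ (y0:ℝ) := by exact_mod_cast hM2
  -- condition dispatch
  have hc : (2*(y0:ℝ)*((N:ℝ)-1) ≤ (N:ℝ)*((y0:ℝ)-1)*(2*(y0:ℝ)-1) ∧ 2*(y0:ℝ) ≤ (N:ℝ)*((y0:ℝ)-1)) ∨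
      ((N:ℝ) = 3 ∧ (y0:ℝ) = 2) ∨ ((N:ℝ) = 2 ∧ 3 ≤ (y0:ℝ)) := by
    rcases hcond with ⟨hN3, hlt, hreal⟩ | ⟨hN3, hge⟩ | ⟨hN2', hgt⟩
    · have hN3r : (3:ℝ) ≤ (N:ℝ) := by exact_mod_cast hN3
      have h1 : 2*(y0:ℝ)*((N:ℝ)-1) ≤ (N:ℝ)*((y0:ℝ)-1)*(2*(y0:ℝ)-1) := by
        rw [show (x0:ℝ)+(x1:ℝ) = (N:ℝ) by rw [hN]; push_cast; ring] at hreal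
        nlinarith [hreal]
      rcases Nat.lt_or_ge y0 3 with hy | hy
      · -- y0 = 2
        have hy2 : y0 = 2 := by omega
        subst hy2
        have hN4 : (N:ℝ) ≤ 4 := by push_cast at h1; nlinarith
        have hN4' : N ≤ 4 := by exact_mod_cast hN4
        rcases (by omega : N = 3 ∨ N = 4) with h | h
        · right; left; constructor
          · rw [h]; norm_num
          · norm_num
        · left
          rw [h]; norm_num
      · have hy3 : (3:ℝ) ≤ (y0:ℝ) := by exact_mod_cast hy
        exact Or.inl ⟨h1, by nlinarith⟩
    · have hN3r : (3:ℝ) ≤ (N:ℝ) := by exact_mod_cast hN3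
      have h6 : 6 ≤ y0 + y0 := by
        calc 6 = 3 * 2 := rfl
        _ ≤ N * (N-1) := Nat.mul_le_mul hN3 (by omega)
        _ ≤ y0 + y0 := hge
      have hy3 : (3:ℝ) ≤ (y0:ℝ) := by exact_mod_cast (by omega : 3 ≤ y0)
      left
      constructor
      · nlinarith [mul_nonneg (by linarith : (0:ℝ) ≤ (N:ℝ))
          (by nlinarith [sq_nonneg ((y0:ℝ)-3)] : (0:ℝ) ≤ 2*(y0:ℝ)^2-5*(y0:ℝ)+1)]
      · nlinarith
    · right; right
      constructor
      · exact_mod_cast hN2'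
      · exact_mod_cast (by omega : 3 ≤ y0)
  have hTk := term_k x0 x1 hmin hn
  have hTl := term_l y0 hm
  rw [hTk lam hlam, hTk 0 le_rfl, hTl lam hlam, hTl 0 le_rfl]
  have hcore := core (N:ℝ) (y0:ℝ) lam hNr hMr hlam hc
  have hzero : Real.log (((N:ℝ)-1+2*0)/((N:ℝ)-1+4*0)) = 0 := by
    rw [show ((N:ℝ)-1+2*0)/((N:ℝ)-1+4*0) = ((N:ℝ)-1)/((N:ℝ)-1) by ring,
      div_self (by linarith : (N:ℝ)-1 ≠ 0), Real.log_one]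
  rw [hzero]
  have hz2 : (((y0:ℝ))-1+2*0)/(2*(y0:ℝ)-1+4*0) = ((y0:ℝ)-1)/(2*(y0:ℝ)-1) := by ring
  rw [hz2]
  linarith [hcore]


/-- `K = 2`, category `k` separated (`min = 0`, `max = a_{k•} > 1`), category `l` balanced
(`a_{l0} = a_{l1} > 1`). Under condition (i), (ii) or (iii) the LOOCV deviance is
minimized at `λ = 0`. -/
theorem stmt8 (a0 a1 : Fin 2 → ℕ) (k l : Fin 2) (hkl : k ≠ l)
    (hk : min (a0 k) (a1 k) = 0 ∧ max (a0 k) (a1 k) = a0 k + a1 k ∧ 1 < a0 k + a1 k)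
    (hl : a0 l = a1 l ∧ 1 < a0 l)
    (hcond :
      (2 < a0 k + a1 k ∧ a0 l + a1 l < (a0 k + a1 k) * (a0 k + a1 k - 1) ∧
        ((a0 l : ℝ) + (a1 l : ℝ)) * (((a0 k : ℝ) + (a1 k : ℝ)) - 1) ≤
          ((a0 k : ℝ) + (a1 k : ℝ)) * (((a0 l : ℝ) + (a1 l : ℝ)) / 2 - 1) *
            (((a0 l : ℝ) + (a1 l : ℝ)) - 1)) ∨
      (2 < a0 k + a1 k ∧ (a0 k + a1 k) * (a0 k + a1 k - 1) ≤ a0 l + a1 l) ∨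
      (a0 k + a1 k = 2 ∧ 4 < a0 l + a1 l)) :
    ∀ lam : ℝ, 0 ≤ lam → loocvDev 2 a0 a1 0 ≤ loocvDev 2 a0 a1 lam := by
  intro lam hlam
  obtain ⟨hkmin, -, hksum⟩ := hk
  obtain ⟨hleq, hlm⟩ := hl
  have hcase : (k = 0 ∧ l = 1) ∨ (k = 1 ∧ l = 0) := by
    fin_cases k <;> fin_cases l <;> simp_all
  simp only [loocvDev, Fin.sum_univ_two]
  rcases hcase with ⟨rfl, rfl⟩ | ⟨rfl, rfl⟩
  · have := aux (a0 0) (a1 0) (a0 1) (a1 1) hkmin hksum hleq hlm hcond lam hlam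
    simp only [termExpr] at this
    linarith
  · have := aux (a0 1) (a1 1) (a0 0) (a1 0) hkmin hksum hleq hlm hcond lam hlam
    simp only [termExpr] at this
    linarith
end

section
/- Let K = 2 with distinct indices k, l ∈ {1,2}. Assume min(a_{k0}, a_{k1}) = 0 with max(a_{k0}, a_{k1}) = a_{k•} = 2, and a_{l0} = a_{l1} = 2 (so a_{l•} = 4 and n = 6). Then lim_{λ→∞} D(λ) = 12 log 2 and D(λ) > 12 log 2 for every λ ≥ 0; i.e. the infimum of the LOOCV deviance over [0, ∞) equals its limit as λ → ∞ and is not attained at any finite λ (λ_D = ∞). -/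
noncomputable def fD (lam : ℝ) : ℝ :=
  -4 * Real.log ((1 + 2 * lam) / (1 + 4 * lam)) - 8 * Real.log ((1 + 2 * lam) / (3 + 4 * lam))

lemma key_s9 (a0 a1 : Fin 2 → ℕ) (k l : Fin 2) (hkl : k ≠ l)
    (hk : min (a0 k) (a1 k) = 0 ∧ max (a0 k) (a1 k) = 2 ∧ a0 k + a1 k = 2)
    (hl : a0 l = 2 ∧ a1 l = 2) (lam : ℝ) (hlam : 0 ≤ lam) :
    loocvDev 2 a0 a1 lam = fD lam := by
  obtain ⟨h1, h2, h3⟩ := hk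
  obtain ⟨h4, h5⟩ := hl
  have d1 : (1 : ℝ) + 4 * lam ≠ 0 := by positivity
  have d3 : (3 : ℝ) + 4 * lam ≠ 0 := by positivity
  have hcase : (a0 k = 0 ∧ a1 k = 2) ∨ (a0 k = 2 ∧ a1 k = 0) := by omega
  have hsum : ∀ F : Fin 2 → ℝ, ∑ i : Fin 2, F i = F k + F l := by
    intro F
    fin_cases k <;> fin_cases l <;>
      first | (exact absurd rfl hkl) | (simp [Fin.sum_univ_two]; try ring)
  unfold loocvDev
  rw [hsum, h4, h5]
  rcases hcase with ⟨ha, hb⟩ | ⟨ha, hb⟩ <;> rw [ha, hb] <;> push_cast <;> norm_num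
  all_goals unfold fD
  all_goals rw [show (1:ℝ) - (2 + 2*lam)/(3 + 4*lam) = (1 + 2*lam)/(3 + 4*lam) by
    field_simp; ring]
  · ring
  · rw [show (1:ℝ) - 2*lam/(1 + 4*lam) = (1 + 2*lam)/(1 + 4*lam) by field_simp; ring]
    ring

lemma fD_pos_form (lam : ℝ) (hlam : 0 ≤ lam) :
    fD lam = -4 * Real.log ((1 + 2*lam)^3 / ((1 + 4*lam) * (3 + 4*lam)^2)) := by
  have p1 : (0:ℝ) < 1 + 2 * lam := by linarith
  have p2 : (0:ℝ) < 1 + 4 * lam := by linarith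
  have p3 : (0:ℝ) < 3 + 4 * lam := by linarith
  rw [show (1 + 2*lam)^3 / ((1 + 4*lam) * (3 + 4*lam)^2)
      = ((1 + 2*lam)/(1 + 4*lam)) * ((1 + 2*lam)/(3 + 4*lam))^2 by field_simp]
  rw [Real.log_mul (by positivity) (by positivity), Real.log_pow]
  unfold fD; push_cast; ring

lemma fD_gt (lam : ℝ) (hlam : 0 ≤ lam) : 12 * Real.log 2 < fD lam := by
  have p1 : (0:ℝ) < 1 + 2 * lam := by linarith
  have p2 : (0:ℝ) < 1 + 4 * lam := by linarith
  have p3 : (0:ℝ) < 3 + 4 * lam := by linarith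
  rw [fD_pos_form lam hlam]
  have hlt : (1 + 2*lam)^3 / ((1 + 4*lam) * (3 + 4*lam)^2) < 1/8 := by
    rw [div_lt_div_iff₀ (by positivity) (by norm_num)]
    nlinarith [sq_nonneg lam, mul_nonneg hlam hlam, mul_nonneg (mul_nonneg hlam hlam) hlam]
  have hlog : Real.log ((1 + 2*lam)^3 / ((1 + 4*lam) * (3 + 4*lam)^2)) < Real.log (1/8) :=
    Real.log_lt_log (by positivity) hlt
  have h8 : Real.log (1/8 : ℝ) = -(3 * Real.log 2) := by
    rw [show (1/8 : ℝ) = (2:ℝ)^(-3 : ℤ) by norm_num, Real.log_zpow]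
    push_cast; ring
  nlinarith [hlog, h8]

lemma fD_tendsto : Filter.Tendsto fD Filter.atTop (nhds (12 * Real.log 2)) := by
  have hinv : Filter.Tendsto (fun x : ℝ => x⁻¹) Filter.atTop (nhds 0) := tendsto_inv_atTop_zero
  have hX : Filter.Tendsto (fun lam : ℝ => (1 + 2*lam)/(1 + 4*lam)) Filter.atTop
      (nhds (1/2)) := by
    have h : Filter.Tendsto (fun lam : ℝ => (lam⁻¹ + 2)/(lam⁻¹ + 4)) Filter.atTop
        (nhds ((0 + 2)/(0 + 4))) :=
      Filter.Tendsto.div (hinv.add tendsto_const_nhds) (hinv.add tendsto_const_nhds) (by norm_num)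
    rw [show ((0:ℝ) + 2)/(0 + 4) = 1/2 by norm_num] at h
    refine h.congr' ?_
    filter_upwards [Filter.eventually_gt_atTop 0] with lam hlam
    field_simp
    try ring
  have hY : Filter.Tendsto (fun lam : ℝ => (1 + 2*lam)/(3 + 4*lam)) Filter.atTop
      (nhds (1/2)) := by
    have h : Filter.Tendsto (fun lam : ℝ => (lam⁻¹ + 2)/(3*lam⁻¹ + 4)) Filter.atTop
        (nhds ((0 + 2)/(3*0 + 4))) :=
      Filter.Tendsto.div (hinv.add tendsto_const_nhds)
        ((hinv.const_mul 3).add tendsto_const_nhds) (by norm_num)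
    rw [show ((0:ℝ) + 2)/(3*0 + 4) = 1/2 by norm_num] at h
    refine h.congr' ?_
    filter_upwards [Filter.eventually_gt_atTop 0] with lam hlam
    field_simp
    try ring
  have hlogc : ContinuousAt Real.log (1/2) := Real.continuousAt_log (by norm_num)
  have hlX := hlogc.tendsto.comp hX
  have hlY := hlogc.tendsto.comp hY
  have := ((hlX.const_mul (-4)).sub (hlY.const_mul 8))
  have heq : -4 * Real.log (1/2) - 8 * Real.log (1/2) = 12 * Real.log 2 := by
    rw [show (1/2 : ℝ) = 2⁻¹ by norm_num, Real.log_inv]; ring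
  rw [heq] at this
  exact this.congr (fun lam => by unfold fD; simp [Function.comp]; try ring)


/-- `K = 2`, category `k` separated with `a_{k•} = 2`, and `a_{l0} = a_{l1} = 2`. Then the
LOOCV deviance tends to `12 log 2` as `λ → ∞`, is strictly above `12 log 2` at every
`λ ≥ 0`, and `12 log 2` is its infimum over `[0, ∞)` (so the infimum is not attained). -/
theorem stmt9 (a0 a1 : Fin 2 → ℕ) (k l : Fin 2) (hkl : k ≠ l)
    (hk : min (a0 k) (a1 k) = 0 ∧ max (a0 k) (a1 k) = 2 ∧ a0 k + a1 k = 2)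
    (hl : a0 l = 2 ∧ a1 l = 2) :
    Filter.Tendsto (loocvDev 2 a0 a1) Filter.atTop (nhds (12 * Real.log 2)) ∧
    (∀ lam : ℝ, 0 ≤ lam → 12 * Real.log 2 < loocvDev 2 a0 a1 lam) ∧
    IsGLB (loocvDev 2 a0 a1 '' Set.Ici 0) (12 * Real.log 2) := by
  have hkey : ∀ lam : ℝ, 0 ≤ lam → loocvDev 2 a0 a1 lam = fD lam :=
    fun lam hlam => key_s9 a0 a1 k l hkl hk hl lam hlam
  have htend : Filter.Tendsto (loocvDev 2 a0 a1) Filter.atTop (nhds (12 * Real.log 2)) := by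
    refine fD_tendsto.congr' ?_
    filter_upwards [Filter.eventually_ge_atTop 0] with lam hlam
    exact (hkey lam hlam).symm
  have hgt : ∀ lam : ℝ, 0 ≤ lam → 12 * Real.log 2 < loocvDev 2 a0 a1 lam := by
    intro lam hlam
    rw [hkey lam hlam]
    exact fD_gt lam hlam
  refine ⟨htend, hgt, ?_, ?_⟩
  · rintro y ⟨lam, hlam, rfl⟩
    exact (hgt lam hlam).le
  · intro b hb
    by_contra hcon
    push_neg at hcon
    have hev : ∀ᶠ lam in Filter.atTop, loocvDev 2 a0 a1 lam < b :=
      htend.eventually_lt_const hcon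
    obtain ⟨lam, hlt, hlam0⟩ := (hev.and (Filter.eventually_ge_atTop 0)).exists
    exact absurd (hb ⟨lam, hlam0, rfl⟩) (not_le.mpr hlt)
end

section
/- Let K = 2 with distinct indices k, l ∈ {1,2}. Assume min(a_{k0}, a_{k1}) = 0 with max(a_{k0}, a_{k1}) = a_{k•} = 2, and {a_{l0}, a_{l1}} = {2, 3} (so a_{l•} = 5 and n = 7). Then D(0) = 14 log 2, lim_{λ→∞} D(λ) = 14 log 2, and D(λ) ≥ 14 log 2 for every λ ≥ 0; i.e. the LOOCV deviance has the same value 14 log 2 at λ = 0 and in the limit λ → ∞, and this common value is its infimum over [0, ∞). -/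
open Filter Real


lemma termK (x : ℝ) (hx : 0 ≤ x) (b0 b1 : ℕ) (h : (b0 = 0 ∧ b1 = 2) ∨ (b0 = 2 ∧ b1 = 0)) :
    (b0:ℝ) * Real.log (1 - ((b1:ℝ) + 2*x)/((b0:ℝ)+(b1:ℝ)-1+4*x)) +
      (b1:ℝ) * Real.log (((b1:ℝ)-1+2*x)/((b0:ℝ)+(b1:ℝ)-1+4*x)) =
    2 * Real.log ((1+2*x)/(1+4*x)) := by
  have h14 : (1:ℝ) + 4*x ≠ 0 := by positivity
  rcases h with ⟨h0, h1⟩ | ⟨h0, h1⟩ <;> subst h0 <;> subst h1 <;> push_cast <;> norm_num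
  congr 1
  field_simp
  ring

lemma termL (x : ℝ) (hx : 0 ≤ x) (b0 b1 : ℕ) (h : (b0 = 2 ∧ b1 = 3) ∨ (b0 = 3 ∧ b1 = 2)) :
    (b0:ℝ) * Real.log (1 - ((b1:ℝ) + 2*x)/((b0:ℝ)+(b1:ℝ)-1+4*x)) +
      (b1:ℝ) * Real.log (((b1:ℝ)-1+2*x)/((b0:ℝ)+(b1:ℝ)-1+4*x)) =
    2 * Real.log ((1+2*x)/(4+4*x)) + 3 * Real.log ((2+2*x)/(4+4*x)) := by
  have h44 : (4:ℝ) + 4*x ≠ 0 := by positivity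
  rcases h with ⟨h0, h1⟩ | ⟨h0, h1⟩ <;> subst h0 <;> subst h1 <;> push_cast <;> norm_num
  · congr 2
    field_simp
    ring
  · have e : 1 - (2 + 2*x)/(4 + 4*x) = (2+2*x)/(4+4*x) := by
      field_simp
      ring
    rw [e]
    ring

lemma keyEq (a0 a1 : Fin 2 → ℕ) (k l : Fin 2) (hkl : k ≠ l)
    (hk : min (a0 k) (a1 k) = 0 ∧ max (a0 k) (a1 k) = 2 ∧ a0 k + a1 k = 2)
    (hl : (a0 l = 2 ∧ a1 l = 3) ∨ (a0 l = 3 ∧ a1 l = 2))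
    (x : ℝ) (hx : 0 ≤ x) :
    loocvDev 2 a0 a1 x =
      -2 * (2 * Real.log ((1+2*x)/(1+4*x)) +
        (2 * Real.log ((1+2*x)/(4+4*x)) + 3 * Real.log ((2+2*x)/(4+4*x)))) := by
  obtain ⟨h1, h2, h3⟩ := hk
  have hkcase : (a0 k = 0 ∧ a1 k = 2) ∨ (a0 k = 2 ∧ a1 k = 0) := by omega
  unfold loocvDev
  rw [Fin.sum_univ_two]
  fin_cases k <;> fin_cases l <;> simp_all <;>
    rw [termK x hx _ _ hkcase, termL x hx _ _ hl] <;> ring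

lemma tendsto_ratio (a b c d : ℝ) (hd : 0 < d) :
    Tendsto (fun x : ℝ => (a + b*x)/(c + d*x)) atTop (nhds (b/d)) := by
  have hden : Tendsto (fun x : ℝ => c + d*x) atTop atTop := by
    apply tendsto_atTop_add_const_left
    exact (tendsto_id.const_mul_atTop hd)
  have h0 : Tendsto (fun x : ℝ => (a - b*c/d)/(c + d*x)) atTop (nhds 0) :=
    Tendsto.div_atTop tendsto_const_nhds hden
  have h1 : Tendsto (fun x : ℝ => b/d + (a - b*c/d)/(c + d*x)) atTop (nhds (b/d)) := by
    have := (tendsto_const_nhds (α := ℝ) (x := b/d) (f := atTop)).add h0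
    simpa using this
  refine h1.congr' ?_
  filter_upwards [hden.eventually_gt_atTop 0] with x hx
  have hne : c + d*x ≠ 0 := ne_of_gt hx
  field_simp
  ring

lemma sum_log_le (x : ℝ) (hx : 0 ≤ x) :
    2 * Real.log ((1+2*x)/(1+4*x)) +
      (2 * Real.log ((1+2*x)/(4+4*x)) + 3 * Real.log ((2+2*x)/(4+4*x))) ≤
    -(7 * Real.log 2) := by
  have hp : (0:ℝ) < 1 + 2*x := by linarith
  have hq : (0:ℝ) < 1 + 4*x := by linarith
  have hr : (0:ℝ) < 4 + 4*x := by linarith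
  have hs : (0:ℝ) < 2 + 2*x := by linarith
  set U := (1+2*x)/(1+4*x) with hU
  set V := (1+2*x)/(4+4*x) with hV
  set W := (2+2*x)/(4+4*x) with hW
  have hUpos : 0 < U := by positivity
  have hVpos : 0 < V := by positivity
  have hWpos : 0 < W := by positivity
  have key : 2 * Real.log U + (2 * Real.log V + 3 * Real.log W) + 7 * Real.log 2 =
      Real.log ((2:ℝ)^7 * (U^2 * (V^2 * W^3))) := by
    rw [Real.log_mul (by positivity) (by positivity),
        Real.log_mul (by positivity) (by positivity),
        Real.log_mul (by positivity) (by positivity),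
        Real.log_pow, Real.log_pow, Real.log_pow, Real.log_pow]
    push_cast
    ring
  have hE : (2:ℝ)^7 * (U^2 * (V^2 * W^3)) =
      (128*(1+2*x)^4*(2+2*x)^3)/((1+4*x)^2*(4+4*x)^5) := by
    rw [hU, hV, hW]
    field_simp
    ring
  have hle1 : (2:ℝ)^7 * (U^2 * (V^2 * W^3)) ≤ 1 := by
    rw [hE, div_le_one (by positivity)]
    nlinarith [mul_nonneg (mul_nonneg hx (pow_nonneg (by linarith : (0:ℝ) ≤ 1+x) 3))
      (by nlinarith : (0:ℝ) ≤ 2 + 9*x + 8*x^2)]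
  have := Real.log_nonpos (by positivity) hle1
  linarith [key ▸ this]

/-- `K = 2`, category `k` separated with `a_{k•} = 2`, and `{a_{l0}, a_{l1}} = {2, 3}`.
Then `D(0) = 14 log 2`, `D(λ) → 14 log 2` as `λ → ∞`, and `14 log 2 ≤ D(λ)` for all
`λ ≥ 0`: the common value is the infimum of the LOOCV deviance over `[0, ∞)`. -/
theorem stmt12 (a0 a1 : Fin 2 → ℕ) (k l : Fin 2) (hkl : k ≠ l)
    (hk : min (a0 k) (a1 k) = 0 ∧ max (a0 k) (a1 k) = 2 ∧ a0 k + a1 k = 2)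
    (hl : (a0 l = 2 ∧ a1 l = 3) ∨ (a0 l = 3 ∧ a1 l = 2)) :
    loocvDev 2 a0 a1 0 = 14 * Real.log 2 ∧
    Filter.Tendsto (loocvDev 2 a0 a1) Filter.atTop (nhds (14 * Real.log 2)) ∧
    ∀ lam : ℝ, 0 ≤ lam → 14 * Real.log 2 ≤ loocvDev 2 a0 a1 lam := by
  refine ⟨?_, ?_, ?_⟩
  · rw [keyEq a0 a1 k l hkl hk hl 0 le_rfl]
    norm_num
    rw [show (1:ℝ)/4 = ((1:ℝ)/2)^2 by norm_num, Real.log_pow, one_div, Real.log_inv]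
    push_cast
    ring
  · have hhalf : (0:ℝ) < 1/2 := by norm_num
    have hcont : ContinuousAt Real.log (1/2) := Real.continuousAt_log (by norm_num)
    have hU : Tendsto (fun x : ℝ => Real.log ((1+2*x)/(1+4*x))) atTop (nhds (Real.log (1/2))) := by
      have hr := tendsto_ratio 1 2 1 4 (by norm_num)
      rw [show (2:ℝ)/4 = 1/2 by norm_num] at hr
      simpa [Function.comp_def] using hcont.tendsto.comp hr
    have hV : Tendsto (fun x : ℝ => Real.log ((1+2*x)/(4+4*x))) atTop (nhds (Real.log (1/2))) := by
      have hr := tendsto_ratio 1 2 4 4 (by norm_num)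
      rw [show (2:ℝ)/4 = 1/2 by norm_num] at hr
      simpa [Function.comp_def] using hcont.tendsto.comp hr
    have hW : Tendsto (fun x : ℝ => Real.log ((2+2*x)/(4+4*x))) atTop (nhds (Real.log (1/2))) := by
      have hr := tendsto_ratio 2 2 4 4 (by norm_num)
      rw [show (2:ℝ)/4 = 1/2 by norm_num] at hr
      simpa [Function.comp_def] using hcont.tendsto.comp hr
    have hmain : Tendsto (fun x : ℝ =>
        -2 * (2 * Real.log ((1+2*x)/(1+4*x)) +
          (2 * Real.log ((1+2*x)/(4+4*x)) + 3 * Real.log ((2+2*x)/(4+4*x)))))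
        atTop (nhds (-2 * (2 * Real.log (1/2) + (2 * Real.log (1/2) + 3 * Real.log (1/2))))) :=
      (((hU.const_mul 2).add ((hV.const_mul 2).add (hW.const_mul 3))).const_mul (-2))
    have heq : -2 * (2 * Real.log (1/2) + (2 * Real.log (1/2) + 3 * Real.log (1/2)))
        = 14 * Real.log 2 := by
      rw [one_div, Real.log_inv]
      ring
    rw [← heq]
    refine hmain.congr' ?_
    filter_upwards [eventually_ge_atTop (0:ℝ)] with x hx
    exact (keyEq a0 a1 k l hkl hk hl x hx).symm
  · intro lam hlam
    rw [keyEq a0 a1 k l hkl hk hl lam hlam]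
    have := sum_log_le lam hlam
    linarith
end
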